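/- arXiv:1711.02907 — 4 statements merged into one kernel-verified Lean document; each statement's English description precedes it below -/
import Mathlib

section
/- Fix $T=1$, $n\in\mathbb{N}_+$ and for $r\in[0,1]$ let $\lfloor r\rfloor_n$ denote the largest grid point $k/n$ strictly less than $r$ for $r\in(k/n,(k+1)/n]$, with $\lfloor 0\rfloor_n=0$. Let $\alpha,\beta,\beta'\in(0,1)$ satisfy $\beta'>\alpha>1-\beta$. Then there is a constant $C=C(\alpha,\beta,\beta')$, independent of $n$, such that for all grid points $s$ and all $t\in(s,1]$: $\int_s^t (t-r)^{\alpha+\beta-1}\int_s^r \frac{(\lfloor r\rfloor_n-\lfloor u\rfloor_n)^{\beta'}}{(r-u)^{\alpha+1}}\,du\,dr \le C (t-s)^{\beta+\beta'}$. -/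
open intervalIntegral

/-- Left grid projection on the uniform grid `{k/n : k = 0,…,n}` of `[0,1]`:
for `r ∈ (k/n, (k+1)/n]`, `floorG n r = k/n`, and `floorG n 0 = 0`. -/
noncomputable def floorG (n : ℕ) (r : ℝ) : ℝ := if r ≤ 0 then 0 else ((⌈n * r⌉ : ℝ) - 1) / n

section helpers
open MeasureTheory Set

lemma rpow_add_le_add_rpow' (x y p : ℝ) (hx : 0 ≤ x) (hy : 0 ≤ y) (hp : 0 ≤ p) (hp1 : p ≤ 1) :
    (x + y) ^ p ≤ x ^ p + y ^ p := by
  lift x to NNReal using hx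
  lift y to NNReal using hy
  have := NNReal.rpow_add_le_add_rpow x y hp hp1
  exact_mod_cast this

lemma measurable_floorG (n : ℕ) : Measurable (floorG n) := by
  unfold floorG
  refine Measurable.ite (measurableSet_le measurable_id measurable_const) measurable_const ?_
  exact ((measurable_from_top.comp (Int.measurable_ceil.comp (measurable_const_mul _))).sub
    measurable_const).div_const _

section floorGfacts
variable {n : ℕ} (hn : 0 < n)
include hn

lemma floorG_le {r : ℝ} (hr : 0 ≤ r) : floorG n r ≤ r := by
  unfold floorG
  split
  · linarith
  · push_neg at *
    rw [div_le_iff₀ (by positivity : (0:ℝ) < n)]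
    have := Int.ceil_lt_add_one ((n:ℝ) * r)
    push_cast at this ⊢
    nlinarith

lemma le_floorG {r : ℝ} (hr : 0 ≤ r) : r - 1 / n ≤ floorG n r := by
  unfold floorG
  split
  · have : r = 0 := le_antisymm (by assumption) hr
    simp [this]
  · rw [le_div_iff₀ (by positivity : (0:ℝ) < n)]
    have := Int.le_ceil ((n:ℝ) * r)
    have hn' : (0:ℝ) < n := by positivity
    field_simp
    have h' := Int.le_ceil (r * (n:ℝ))
    nlinarith

lemma floorG_nonneg (r : ℝ) : 0 ≤ floorG n r := by
  unfold floorG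
  split
  · exact le_refl _
  · push_neg at *
    have h1 : (1:ℤ) ≤ ⌈(n:ℝ) * r⌉ := by
      rw [Int.le_ceil_iff]
      push_cast
      have hn' : (0:ℝ) < n := by positivity
      nlinarith
    have : (1:ℝ) ≤ (⌈(n:ℝ) * r⌉ : ℝ) := by exact_mod_cast h1
    have hn' : (0:ℝ) < n := by positivity
    apply div_nonneg (by linarith) (le_of_lt hn')

lemma floorG_mono : Monotone (floorG n) := by
  intro u r hur
  unfold floorG
  split
  · split
    · exact le_refl _
    · push_neg at *
      have h1 : (1:ℤ) ≤ ⌈(n:ℝ) * r⌉ := by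
        rw [Int.le_ceil_iff]; push_cast
        have hn' : (0:ℝ) < n := by positivity
        nlinarith
      have : (1:ℝ) ≤ (⌈(n:ℝ) * r⌉ : ℝ) := by exact_mod_cast h1
      have hn' : (0:ℝ) < n := by positivity
      apply div_nonneg (by linarith) (le_of_lt hn')
  · split
    · push_neg at *; linarith
    · push_neg at *
      have hnn : (0:ℝ) < n := by positivity
      have hc : ⌈(n:ℝ)*u⌉ ≤ ⌈(n:ℝ)*r⌉ := Int.ceil_le_ceil (by nlinarith)
      have hc2 : ((⌈(n:ℝ)*u⌉:ℝ)) ≤ ((⌈(n:ℝ)*r⌉:ℝ)) := by exact_mod_cast hc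
      gcongr <;> linarith

/-- cell identity -/
lemma floorG_eq_of_mem {j : ℤ} (hj : 0 ≤ j) {r : ℝ} (h1 : (j:ℝ)/n < r) (h2 : r ≤ ((j:ℝ)+1)/n) :
    floorG n r = (j:ℝ)/n := by
  have hn' : (0:ℝ) < n := by positivity
  have hr : 0 < r := lt_of_le_of_lt (by positivity) h1
  have hceil : ⌈(n:ℝ) * r⌉ = j + 1 := by
    rw [Int.ceil_eq_iff]
    push_cast
    constructor
    · have := (div_lt_iff₀ hn').mp h1; nlinarith
    · have := (le_div_iff₀ hn').mp h2; nlinarith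
  unfold floorG
  rw [if_neg (by linarith), hceil]
  push_cast
  ring

end floorGfacts

section extra
variable {n : ℕ} (hn : 0 < n)
include hn

lemma floorG_lt {r : ℝ} (hr : 0 < r) : floorG n r < r := by
  unfold floorG
  rw [if_neg (by linarith), div_lt_iff₀ (by positivity : (0:ℝ) < n)]
  have := Int.ceil_lt_add_one ((n:ℝ) * r)
  nlinarith

lemma grid_le_floorG {k : ℕ} {r : ℝ} (h : (k:ℝ)/n < r) : (k:ℝ)/n ≤ floorG n r := by
  have hn' : (0:ℝ) < n := by positivity
  have hr : 0 < r := lt_of_le_of_lt (by positivity) h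
  have hc : (k:ℤ) + 1 ≤ ⌈(n:ℝ) * r⌉ := by
    rw [Int.add_one_le_iff, Int.lt_ceil]
    push_cast
    have := (div_lt_iff₀ hn').mp h
    nlinarith
  have hc' : ((k:ℝ)) + 1 ≤ (⌈(n:ℝ) * r⌉ : ℝ) := by exact_mod_cast hc
  unfold floorG
  rw [if_neg (by linarith)]
  gcongr <;> linarith

end extra

lemma floorG_eq_on_Ioc {n : ℕ} (hn : 0 < n) {r u : ℝ} (hr : 0 < r)
    (hu : u ∈ Set.Ioc (floorG n r) r) : floorG n u = floorG n r := by
  have hn' : (0:ℝ) < n := by positivity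
  set j : ℤ := ⌈(n:ℝ) * r⌉ - 1 with hj_def
  have hj : 0 ≤ j := by
    have : (1:ℤ) ≤ ⌈(n:ℝ) * r⌉ := by
      rw [Int.le_ceil_iff]; push_cast; nlinarith
    omega
  have hc : floorG n r = (j:ℝ)/n := by
    unfold floorG
    rw [if_neg (by linarith)]
    push_cast [hj_def]
    ring
  have h2 : r ≤ ((j:ℝ)+1)/n := by
    rw [le_div_iff₀ hn']
    have := Int.le_ceil ((n:ℝ) * r)
    push_cast [hj_def]
    push_cast at this
    nlinarith
  rw [hc]
  exact floorG_eq_of_mem hn hj (hc ▸ hu.1) (le_trans hu.2 h2)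

lemma inner_bound {α β' : ℝ} (hα0 : 0 < α) (hβ'0 : 0 < β') (hβ'1 : β' ≤ 1)
    (hαβ' : α < β') {n k : ℕ} (hn : 0 < n) {r : ℝ} (hr : (k:ℝ)/n < r) :
    (∫ u in ((k:ℝ)/n)..r, (floorG n r - floorG n u) ^ β' / (r - u) ^ (α+1))
      ≤ (r - (k:ℝ)/n) ^ (β'-α) / (β'-α)
        + ((1/(n:ℝ)) ^ β' / α) * (r - floorG n r) ^ (-α) := by
  have hn' : (0:ℝ) < n := by positivity
  set s : ℝ := (k:ℝ)/n with hs_def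
  set c : ℝ := floorG n r with hc_def
  set h : ℝ := 1/(n:ℝ) with hh_def
  have hs0 : 0 ≤ s := by positivity
  have hr0 : 0 < r := lt_of_le_of_lt hs0 hr
  have hcr : c < r := floorG_lt hn hr0
  have hsc : s ≤ c := grid_le_floorG hn hr
  have hh0 : 0 < h := by positivity
  set f : ℝ → ℝ := fun u => (c - floorG n u) ^ β' / (r - u) ^ (α+1) with hf_def
  -- the integrand vanishes on (c, r]
  have claim0 : Set.EqOn f 0 (Set.Ioc c r) := by
    intro u hu
    have : floorG n u = c := floorG_eq_on_Ioc hn hr0 hu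
    simp only [hf_def, this, sub_self, Pi.zero_apply]
    rw [Real.zero_rpow (by linarith), zero_div]
  have int_cr : IntervalIntegrable f volume c r := by
    rw [intervalIntegrable_iff_integrableOn_Ioc_of_le (le_of_lt hcr)]
    exact (integrableOn_zero (ε' := ℝ)).congr_fun (fun u hu => (claim0 hu).symm) measurableSet_Ioc
  have int_cr_zero : (∫ u in c..r, f u) = 0 := by
    rw [integral_of_le (le_of_lt hcr), setIntegral_congr_fun measurableSet_Ioc claim0]
    simp
  -- the comparison function on [s, c]
  set g : ℝ → ℝ := fun u => (r-u) ^ (β'-(α+1)) + h ^ β' * (r-u) ^ (-(α+1)) with hg_def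
  have hcont : ∀ p : ℝ, ContinuousOn (fun u : ℝ => (r-u) ^ p) (Set.uIcc s c) := by
    intro p
    apply (continuousOn_const.sub continuousOn_id).rpow_const
    intro x hx
    rw [Set.uIcc_of_le hsc] at hx
    exact Or.inl (by intro hrx; simp only [Pi.sub_apply, id] at hrx; nlinarith [hx.2])
  have int_g1 : IntervalIntegrable (fun u : ℝ => (r-u) ^ (β'-(α+1))) volume s c :=
    (hcont _).intervalIntegrable
  have int_g2 : IntervalIntegrable (fun u : ℝ => (r-u) ^ (-(α+1))) volume s c :=
    (hcont _).intervalIntegrable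
  have int_g : IntervalIntegrable g volume s c := int_g1.add (int_g2.const_mul _)
  -- pointwise comparison on [s, c]
  have hfg : ∀ u ∈ Set.Icc s c, f u ≤ g u := by
    intro u hu
    have hu0 : 0 ≤ u := le_trans hs0 hu.1
    have hur : u < r := lt_of_le_of_lt hu.2 hcr
    have hru : 0 < r - u := by linarith
    have hd0 : 0 ≤ c - floorG n u := by
      have := floorG_mono hn (le_of_lt hur)
      simpa [hc_def] using sub_nonneg.mpr this
    have hd1 : c - floorG n u ≤ (r - u) + h := by
      have h1 := le_floorG hn hu0
      have h2 : c ≤ r := le_of_lt hcr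
      simp only [hh_def]
      linarith
    have step1 : (c - floorG n u) ^ β' ≤ ((r-u) + h) ^ β' :=
      Real.rpow_le_rpow hd0 hd1 (le_of_lt hβ'0)
    have step2 : ((r-u) + h) ^ β' ≤ (r-u) ^ β' + h ^ β' :=
      rpow_add_le_add_rpow' _ _ _ (le_of_lt hru) (le_of_lt hh0) (le_of_lt hβ'0) hβ'1
    have hpow_pos : 0 < (r-u) ^ (α+1) := Real.rpow_pos_of_pos hru _
    calc f u = (c - floorG n u) ^ β' / (r-u) ^ (α+1) := rfl
      _ ≤ ((r-u) ^ β' + h ^ β') / (r-u) ^ (α+1) :=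
          (div_le_div_iff_of_pos_right hpow_pos).mpr (le_trans step1 step2)
      _ = g u := by
          simp only [hg_def]
          rw [add_div, Real.rpow_neg (le_of_lt hru), Real.rpow_sub hru, div_eq_mul_inv (h ^ β')]
  -- integrability of f on [s, c]
  have hf_meas : Measurable f := by
    apply Measurable.div
    · exact (Real.continuous_rpow_const (le_of_lt hβ'0)).measurable.comp
        (measurable_const.sub (measurable_floorG n))
    · exact (Real.continuous_rpow_const (by linarith)).measurable.comp
        (measurable_const.sub measurable_id)
  have hf_nonneg : ∀ u ∈ Set.Icc s c, 0 ≤ f u := by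
    intro u hu
    have hur : u ≤ r := le_of_lt (lt_of_le_of_lt hu.2 hcr)
    apply div_nonneg
    · apply Real.rpow_nonneg
      have := floorG_mono hn hur
      simpa [hc_def] using sub_nonneg.mpr this
    · exact Real.rpow_nonneg (by linarith) _
  have int_sc : IntervalIntegrable f volume s c := by
    rw [intervalIntegrable_iff_integrableOn_Ioc_of_le hsc]
    apply Integrable.mono' int_g.1 (hf_meas.aestronglyMeasurable.restrict)
    rw [ae_restrict_iff' measurableSet_Ioc]
    apply ae_of_all
    intro u hu
    have hu' : u ∈ Set.Icc s c := Set.Ioc_subset_Icc_self hu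
    rw [Real.norm_eq_abs, abs_of_nonneg (hf_nonneg u hu')]
    exact hfg u hu'
  have e1 : (∫ u in s..c, (r-u) ^ (β'-(α+1)))
      = ((r-s) ^ (β'-α) - (r-c) ^ (β'-α))/(β'-α) := by
    rw [intervalIntegral.integral_comp_sub_left (fun x : ℝ => x ^ (β'-(α+1))) r]
    rw [integral_rpow (Or.inl (by linarith))]
    rw [show β'-(α+1)+1 = β'-α by ring]
  have e2 : (∫ u in s..c, (r-u) ^ (-(α+1)))
      = ((r-c) ^ (-α) - (r-s) ^ (-α))/α := by
    rw [intervalIntegral.integral_comp_sub_left (fun x : ℝ => x ^ (-(α+1))) r]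
    rw [integral_rpow (Or.inr ⟨by intro hcon; linarith [neg_eq_iff_eq_neg.mp hcon],
      notMem_uIcc_of_lt (by linarith) (by linarith)⟩)]
    rw [show -(α+1)+1 = -α by ring]
    rw [div_eq_div_iff (by linarith) (by linarith)]
    ring
  calc (∫ u in s..r, f u) = (∫ u in s..c, f u) := by
        rw [← integral_add_adjacent_intervals int_sc int_cr, int_cr_zero, add_zero]
    _ ≤ (∫ u in s..c, g u) := integral_mono_on hsc int_sc int_g hfg
    _ = (∫ u in s..c, (r-u) ^ (β'-(α+1))) + h ^ β' * (∫ u in s..c, (r-u) ^ (-(α+1))) := by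
        simp only [hg_def]
        rw [integral_add int_g1 (int_g2.const_mul _), intervalIntegral.integral_const_mul]
    _ ≤ (r - s) ^ (β'-α)/(β'-α) + (h ^ β'/α) * (r - c) ^ (-α) := by
        rw [e1, e2]
        have t1 : ((r-s) ^ (β'-α) - (r-c) ^ (β'-α))/(β'-α) ≤ (r-s) ^ (β'-α)/(β'-α) := by
          apply (div_le_div_iff_of_pos_right (by linarith)).mpr
          nlinarith [Real.rpow_nonneg (show (0:ℝ) ≤ r-c by linarith) (β'-α)]
        have t2 : h ^ β' * (((r-c) ^ (-α) - (r-s) ^ (-α))/α) ≤ h ^ β'/α * (r-c) ^ (-α) := by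
          rw [show h ^ β'/α * (r-c) ^ (-α) = h ^ β' * ((r-c) ^ (-α)/α) by ring]
          apply mul_le_mul_of_nonneg_left _ (Real.rpow_nonneg (le_of_lt hh0) β')
          apply (div_le_div_iff_of_pos_right hα0).mpr
          nlinarith [Real.rpow_nonneg (show (0:ℝ) ≤ r-s by linarith) (-α)]
        linarith

end helpers

section main
open MeasureTheory Set

lemma cell_eq {α : ℝ} (hα0 : 0 < α) (hα1 : α < 1) {n : ℕ} (hn : 0 < n) (j : ℕ) :
    IntervalIntegrable (fun r => (r - floorG n r) ^ (-α)) volume ((j:ℝ)/n) (((j:ℝ)+1)/n)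
    ∧ (∫ r in ((j:ℝ)/n)..(((j:ℝ)+1)/n), (r - floorG n r) ^ (-α))
        = (1/(n:ℝ)) ^ (1-α) / (1-α) := by
  have hn' : (0:ℝ) < n := by positivity
  set a : ℝ := (j:ℝ)/n with ha_def
  set b : ℝ := ((j:ℝ)+1)/n with hb_def
  have hab : a < b := by
    rw [ha_def, hb_def, div_lt_div_iff_of_pos_right hn']
    linarith
  have heq : Set.EqOn (fun r : ℝ => (r - a) ^ (-α)) (fun r => (r - floorG n r) ^ (-α))
      (Set.Ioc a b) := by
    intro r hr
    have : floorG n r = (j:ℝ)/n := by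
      have := floorG_eq_of_mem hn (j := (j:ℤ)) (by positivity) (r := r) (by push_cast; exact hr.1)
        (by push_cast; exact hr.2)
      push_cast at this
      exact this
    simp only [this, ha_def]
  have base : IntervalIntegrable (fun x : ℝ => x ^ (-α)) volume 0 (b - a) :=
    intervalIntegrable_rpow' (by linarith)
  have int_shift : IntervalIntegrable (fun r : ℝ => (r - a) ^ (-α)) volume a b := by
    have := base.comp_sub_right a
    simpa using this
  have int_cell : IntervalIntegrable (fun r => (r - floorG n r) ^ (-α)) volume a b := by
    rw [intervalIntegrable_iff_integrableOn_Ioc_of_le (le_of_lt hab)]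
    exact int_shift.1.congr_fun heq measurableSet_Ioc
  refine ⟨int_cell, ?_⟩
  have hval : (∫ r in a..b, (r - floorG n r) ^ (-α)) = ∫ r in a..b, (r - a) ^ (-α) := by
    rw [integral_of_le (le_of_lt hab), integral_of_le (le_of_lt hab)]
    exact (setIntegral_congr_fun measurableSet_Ioc heq).symm
  rw [hval, intervalIntegral.integral_comp_sub_right (fun x : ℝ => x ^ (-α)) a,
    integral_rpow (Or.inl (by linarith))]
  have hba : b - a = 1/(n:ℝ) := by
    rw [ha_def, hb_def]; field_simp; ring
  rw [sub_self, hba, Real.zero_rpow (by linarith), show -α + 1 = 1 - α by ring, sub_zero]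

lemma sum_cells {α : ℝ} (hα0 : 0 < α) (hα1 : α < 1) {n : ℕ} (hn : 0 < n) (k m : ℕ) :
    IntervalIntegrable (fun r => (r - floorG n r) ^ (-α)) volume ((k:ℝ)/n) (((k+m : ℕ):ℝ)/n)
    ∧ (∫ r in ((k:ℝ)/n)..(((k+m:ℕ):ℝ)/n), (r - floorG n r) ^ (-α))
        = m * ((1/(n:ℝ)) ^ (1-α) / (1-α)) := by
  set a : ℕ → ℝ := fun i => ((k+i : ℕ):ℝ)/n with ha_def
  have hcell : ∀ i : ℕ, IntervalIntegrable (fun r => (r - floorG n r) ^ (-α)) volume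
      (a i) (a (i+1)) ∧ (∫ r in (a i)..(a (i+1)), (r - floorG n r) ^ (-α))
        = (1/(n:ℝ)) ^ (1-α) / (1-α) := by
    intro i
    have h1 : a i = ((k+i : ℕ):ℝ)/n := rfl
    have h2 : a (i+1) = (((k+i : ℕ):ℝ)+1)/n := by
      simp only [ha_def]
      push_cast
      ring
    rw [h1, h2]
    exact cell_eq hα0 hα1 hn (k+i)
  have h0 : a 0 = (k:ℝ)/n := by simp [ha_def]
  have hm : a m = ((k+m : ℕ):ℝ)/n := rfl
  constructor
  · have := IntervalIntegrable.trans_iterate (a := a) (n := m) (fun i _ => (hcell i).1)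
    rwa [h0, hm] at this
  · have := intervalIntegral.sum_integral_adjacent_intervals (a := a) (n := m)
      (fun i _ => (hcell i).1)
    rw [h0, hm] at this
    rw [← this]
    rw [Finset.sum_congr rfl (fun i _ => (hcell i).2), Finset.sum_const, Finset.card_range]
    simp [nsmul_eq_mul]


set_option maxHeartbeats 1600000 in
/-- **Fractional-calculus kernel estimate with left grid projections.**
Fix `T = 1` and `n ∈ ℕ₊`. If `β' > α > 1 - β` (with `α, β, β' ∈ (0,1)`), then there is a
constant `C = C(α, β, β')` independent of `n` such that for every grid point `s` and every
`t ∈ (s, 1]`,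
`∫_s^t (t-r)^{α+β-1} ∫_s^r (⌊r⌋ₙ - ⌊u⌋ₙ)^{β'} / (r-u)^{α+1} du dr ≤ C (t-s)^{β+β'}`. -/
theorem kernel_estimate_floor (α β β' : ℝ)
    (hα : α ∈ Set.Ioo (0:ℝ) 1) (hβ : β ∈ Set.Ioo (0:ℝ) 1) (hβ' : β' ∈ Set.Ioo (0:ℝ) 1)
    (h1 : β' > α) (h2 : α > 1 - β) :
    ∃ C : ℝ, 0 < C ∧ ∀ (n : ℕ), 0 < n → ∀ (k : ℕ) (s t : ℝ), k ≤ n → s = (k : ℝ) / n →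
      s < t → t ≤ 1 →
      (∫ r in s..t, (t - r) ^ (α + β - 1) *
          ∫ u in s..r, (floorG n r - floorG n u) ^ β' / (r - u) ^ (α + 1)) ≤
        C * (t - s) ^ (β + β') := by
  obtain ⟨hα0, hα1⟩ := hα
  obtain ⟨hβ0, hβ1⟩ := hβ
  obtain ⟨hβ'0, hβ'1⟩ := hβ'
  have hβα : β' - α > 0 := by linarith
  have hCpos : 0 < 1/((β'-α)*(β'-α+1)) + 2/(α*(1-α)) :=
    add_pos (div_pos one_pos (by nlinarith)) (div_pos (by norm_num) (by nlinarith))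
  refine ⟨1/((β'-α)*(β'-α+1)) + 2/(α*(1-α)), hCpos, ?_⟩
  intro n hn k s t hkn hs hst ht1
  subst hs
  set s : ℝ := (k:ℝ)/n with hs_def
  have hn' : (0:ℝ) < n := by positivity
  have hs0 : 0 ≤ s := by positivity
  have hts : 0 < t - s := by linarith
  have hRHS : 0 ≤ (1/((β'-α)*(β'-α+1)) + 2/(α*(1-α))) * (t - s) ^ (β + β') := by
    exact mul_nonneg (le_of_lt hCpos) (Real.rpow_nonneg (le_of_lt hts) _)
  set F : ℝ → ℝ := fun r => (t - r) ^ (α + β - 1) *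
      ∫ u in s..r, (floorG n r - floorG n u) ^ β' / (r - u) ^ (α + 1) with hF_def
  show (∫ r in s..t, F r) ≤ _
  by_cases hsmall : t ≤ s + 1/n
  · -- small case: everything vanishes
    have hzero : Set.EqOn F 0 (Set.uIcc s t) := by
      intro r hr
      rw [Set.uIcc_of_le (le_of_lt hst)] at hr
      rcases eq_or_lt_of_le hr.1 with he | hlt
      · simp only [hF_def, Pi.zero_apply, ← he, integral_same, mul_zero]
      · have hinner : (∫ u in s..r, (floorG n r - floorG n u) ^ β' / (r - u) ^ (α + 1)) = 0 := by
          have heq : Set.EqOn (fun u => (floorG n r - floorG n u) ^ β' / (r - u) ^ (α + 1))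
              (fun _ => (0:ℝ)) (Set.Ioc s r) := by
            intro u hu
            have hflr : ∀ x : ℝ, s < x → x ≤ t → floorG n x = s := by
              intro x hx1 hx2
              have := floorG_eq_of_mem hn (j := (k:ℤ)) (by positivity) (r := x)
                (by push_cast; exact hx1) (by push_cast; rw [add_div]; linarith [hsmall, hx2])
              push_cast at this
              exact this
            have e1 : floorG n r = s := hflr r hlt hr.2
            have e2 : floorG n u = s := hflr u hu.1 (le_trans hu.2 hr.2)
            simp only [e1, e2, sub_self]
            rw [Real.zero_rpow (by linarith), zero_div]
          rw [integral_of_le (le_of_lt hlt), setIntegral_congr_fun measurableSet_Ioc heq]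
          simp
        simp only [hF_def, Pi.zero_apply, hinner, mul_zero]
    rw [intervalIntegral.integral_congr hzero]
    simpa using hRHS
  · push_neg at hsmall
    by_cases hInt : IntervalIntegrable F volume s t
    swap
    · rw [intervalIntegral.integral_undef hInt]
      exact hRHS
    -- main case
    set gp : ℝ → ℝ := fun r => (r - floorG n r) ^ (-α) with hgp_def
    set m : ℕ := (⌈(n:ℝ)*t⌉).toNat - k with hm_def
    have hkn' : ((k:ℝ)) < (n:ℝ)*t := by
      have := (div_lt_iff₀ hn').mp hst
      linarith
    have hceil1 : (k:ℤ) + 1 ≤ ⌈(n:ℝ)*t⌉ := by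
      rw [Int.add_one_le_iff, Int.lt_ceil]
      push_cast
      exact hkn'
    have hkm : ((k + m : ℕ) : ℤ) = ⌈(n:ℝ)*t⌉ := by
      have h0 : (0:ℤ) ≤ ⌈(n:ℝ)*t⌉ := by omega
      simp only [hm_def]
      push_cast
      omega
    set K : ℝ := ((k+m : ℕ):ℝ)/n with hK_def
    have hkmr : ((k+m:ℕ):ℝ) = ((⌈(n:ℝ)*t⌉ : ℤ) : ℝ) := by exact_mod_cast hkm
    have htK : t ≤ K := by
      rw [hK_def, le_div_iff₀ hn', hkmr]
      have := Int.le_ceil ((n:ℝ)*t)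
      linarith
    have h1n : 1/(n:ℝ) ≤ t - s := by linarith
    have hmle : (m:ℝ) ≤ 2*(n:ℝ)*(t-s) := by
      have h2 : (⌈(n:ℝ)*t⌉:ℝ) < (n:ℝ)*t + 1 := Int.ceil_lt_add_one _
      have h3 : (n:ℝ)*s = k := by rw [hs_def]; field_simp
      have h4 : 1 ≤ (n:ℝ)*(t-s) := by
        rw [mul_sub]
        have : (n:ℝ) * (1/(n:ℝ)) = 1 := by field_simp
        nlinarith
      have h5 : (k:ℝ) + m = (⌈(n:ℝ)*t⌉ : ℤ) := by push_cast at hkmr ⊢; linarith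
      nlinarith
    obtain ⟨g_int_K, g_val_K⟩ := sum_cells hα0 hα1 hn k m
    rw [← hs_def, ← hK_def] at g_int_K g_val_K
    have huIcc : Set.uIcc s t ⊆ Set.uIcc s K := by
      rw [Set.uIcc_of_le (le_of_lt hst), Set.uIcc_of_le (le_trans (le_of_lt hst) htK)]
      exact Set.Icc_subset_Icc le_rfl htK
    have huIcc2 : Set.uIcc t K ⊆ Set.uIcc s K := by
      rw [Set.uIcc_of_le htK, Set.uIcc_of_le (le_trans (le_of_lt hst) htK)]
      exact Set.Icc_subset_Icc (le_of_lt hst) le_rfl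
    have g_st : IntervalIntegrable gp volume s t := g_int_K.mono_set huIcc
    have g_tK : IntervalIntegrable gp volume t K := g_int_K.mono_set huIcc2
    have gp_nonneg : ∀ r : ℝ, 0 ≤ r → 0 ≤ gp r := fun r hr =>
      Real.rpow_nonneg (sub_nonneg.mpr (floorG_le hn hr)) _
    have g_bound : (∫ r in s..t, gp r) ≤ (m:ℝ) * ((1/(n:ℝ))^(1-α)/(1-α)) := by
      rw [← g_val_K, ← integral_add_adjacent_intervals g_st g_tK]
      have hnn : 0 ≤ ∫ r in t..K, gp r :=
        integral_nonneg htK (fun u hu => gp_nonneg u (le_trans (le_trans hs0 (le_of_lt hst)) hu.1))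
      linarith
    set G : ℝ → ℝ := fun r =>
      (t-s)^(α+β-1) * ((r-s)^(β'-α)/(β'-α) + ((1/(n:ℝ))^β'/α) * gp r) with hG_def
    have p1_int : IntervalIntegrable (fun r : ℝ => (r-s)^(β'-α)) volume s t := by
      have := (intervalIntegrable_rpow' (a := 0) (b := t - s)
        (by linarith : (-1:ℝ) < β'-α)).comp_sub_right s
      simpa using this
    have G_int : IntervalIntegrable G volume s t :=
      ((p1_int.div_const _).add (g_st.const_mul _)).const_mul _
    have hG_nonneg : ∀ r : ℝ, 0 ≤ r → s ≤ r → 0 ≤ G r := by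
      intro r hr0 hsr
      apply mul_nonneg (Real.rpow_nonneg (le_of_lt hts) _)
      apply add_nonneg
      · exact div_nonneg (Real.rpow_nonneg (sub_nonneg.mpr hsr) _) (le_of_lt hβα)
      · exact mul_nonneg (div_nonneg (Real.rpow_nonneg (by positivity) _) (le_of_lt hα0))
          (gp_nonneg r hr0)
    have FG : ∀ r ∈ Set.Icc s t, F r ≤ G r := by
      intro r hr
      rcases eq_or_lt_of_le hr.1 with he | hlt
      · have : F s = 0 := by
          simp only [hF_def, integral_same, mul_zero]
        rw [← he, this]
        exact hG_nonneg s hs0 le_rfl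
      · have hI0 : 0 ≤ ∫ u in s..r, (floorG n r - floorG n u) ^ β' / (r - u) ^ (α + 1) := by
          apply integral_nonneg (le_of_lt hlt)
          intro u hu
          exact div_nonneg (Real.rpow_nonneg (sub_nonneg.mpr (floorG_mono hn hu.2)) _)
            (Real.rpow_nonneg (by linarith [hu.2]) _)
        have houter : (t-r)^(α+β-1) ≤ (t-s)^(α+β-1) :=
          Real.rpow_le_rpow (by linarith [hr.2]) (by linarith [hr.1]) (by linarith)
        have hlt' : (k:ℝ)/n < r := by rw [← hs_def]; exact hlt
        have hinner := inner_bound hα0 hβ'0 (le_of_lt hβ'1) (by linarith) hn hlt'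
        rw [← hs_def] at hinner
        calc F r ≤ (t-s)^(α+β-1) *
              (∫ u in s..r, (floorG n r - floorG n u) ^ β' / (r - u) ^ (α + 1)) :=
              mul_le_mul_of_nonneg_right houter hI0
          _ ≤ G r := mul_le_mul_of_nonneg_left hinner (Real.rpow_nonneg (le_of_lt hts) _)
    have p1_val : (∫ r in s..t, (r-s)^(β'-α)) = (t-s)^(β'-α+1)/(β'-α+1) := by
      rw [intervalIntegral.integral_comp_sub_right (fun x : ℝ => x^(β'-α)) s,
        integral_rpow (Or.inl (by linarith))]
      rw [sub_self, Real.zero_rpow (by linarith), sub_zero]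
    have key1 : (n:ℝ) * ((1/(n:ℝ))^β' * (1/(n:ℝ))^(1-α)) = (1/(n:ℝ))^(β'-α) := by
      rw [← Real.rpow_add (by positivity), show β' + (1-α) = (β'-α) + 1 by ring,
        Real.rpow_add_one (by positivity : (1/(n:ℝ)) ≠ 0)]
      field_simp
    have key2 : (1/(n:ℝ))^(β'-α) ≤ (t-s)^(β'-α) :=
      Real.rpow_le_rpow (by positivity) h1n (le_of_lt hβα)
    have key3 : (t-s) * (t-s)^(β'-α) = (t-s)^(β'-α+1) := by
      rw [Real.rpow_add_one (ne_of_gt hts)]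
      ring
    have hn1 : (0:ℝ) ≤ 1/(n:ℝ) := by positivity
    have hrp1 : (0:ℝ) ≤ (1/(n:ℝ))^β'/α := div_nonneg (Real.rpow_nonneg hn1 _) (le_of_lt hα0)
    have hc2 : (0:ℝ) ≤ 2/(α*(1-α)) := le_of_lt (div_pos (by norm_num) (mul_pos hα0 (by linarith)))
    calc (∫ r in s..t, F r) ≤ ∫ r in s..t, G r := integral_mono_on (le_of_lt hst) hInt G_int FG
      _ = (t-s)^(α+β-1) * ((∫ r in s..t, (r-s)^(β'-α))/(β'-α)
            + ((1/(n:ℝ))^β'/α) * ∫ r in s..t, gp r) := by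
          simp only [hG_def]
          rw [intervalIntegral.integral_const_mul, integral_add (p1_int.div_const _) (g_st.const_mul _),
            intervalIntegral.integral_div, intervalIntegral.integral_const_mul]
      _ ≤ (t-s)^(α+β-1) * ((t-s)^(β'-α+1)/(β'-α+1)/(β'-α)
            + 2/(α*(1-α)) * (t-s)^(β'-α+1)) := by
          apply mul_le_mul_of_nonneg_left _ (Real.rpow_nonneg (le_of_lt hts) _)
          apply add_le_add
          · rw [p1_val]
          · calc ((1/(n:ℝ))^β'/α) * (∫ r in s..t, gp r)
                ≤ ((1/(n:ℝ))^β'/α) * ((m:ℝ) * ((1/(n:ℝ))^(1-α)/(1-α))) :=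
                  mul_le_mul_of_nonneg_left g_bound hrp1
              _ ≤ ((1/(n:ℝ))^β'/α) * ((2*(n:ℝ)*(t-s)) * ((1/(n:ℝ))^(1-α)/(1-α))) := by
                  exact mul_le_mul_of_nonneg_left
                    (mul_le_mul_of_nonneg_right hmle
                      (div_nonneg (Real.rpow_nonneg hn1 _) (by linarith))) hrp1
              _ = 2/(α*(1-α)) * ((t-s) * ((n:ℝ) * ((1/(n:ℝ))^β' * (1/(n:ℝ))^(1-α)))) := by
                  field_simp
              _ = 2/(α*(1-α)) * ((t-s) * (1/(n:ℝ))^(β'-α)) := by rw [key1]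
              _ ≤ 2/(α*(1-α)) * ((t-s) * (t-s)^(β'-α)) := by
                  apply mul_le_mul_of_nonneg_left
                    (mul_le_mul_of_nonneg_left key2 (le_of_lt hts)) hc2
              _ = 2/(α*(1-α)) * (t-s)^(β'-α+1) := by rw [key3]
      _ = (1/((β'-α)*(β'-α+1)) + 2/(α*(1-α))) * (t - s) ^ (β + β') := by
          rw [show (t-s)^(α+β-1) * ((t-s)^(β'-α+1)/(β'-α+1)/(β'-α)
              + 2/(α*(1-α)) * (t-s)^(β'-α+1))
            = ((t-s)^(α+β-1) * (t-s)^(β'-α+1)) * (1/((β'-α)*(β'-α+1)) + 2/(α*(1-α))) by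
              field_simp]
          rw [← Real.rpow_add hts, show α+β-1+(β'-α+1) = β+β' by ring]
          ring

end main
end

section
/- Let $X$ be an $\mathbb{R}^d$-valued path whose sample paths are $\beta$-Hölder on $[0,T]$ for some $\beta\in(1/2,1)$, and let $V\in\mathcal{C}^1_b(\mathbb{R}^m;\mathbb{R}^{m\times d})$. For $n\in\mathbb{N}_+$ define the Euler-type scheme $Y^n_t=y+\int_0^t V(Y^n_{\lfloor s\rfloor_n})dX_s$ on the uniform grid of mesh $h=T/n$ (Young integral of a piecewise-constant integrand). Then $\|Y^n\|_\beta \le C(V,\beta,T)\max\{\|X\|_\beta,\|X\|_\beta^{1/\beta}\}$ with $C$ independent of $n$. -/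
/-- The `β`-Hölder seminorm of `f` on `[s,t]`. -/
noncomputable def holderSemi {E : Type*} [NormedAddCommGroup E]
    (f : ℝ → E) (s t β : ℝ) : ℝ :=
  sSup {c | ∃ u v, s ≤ u ∧ u < v ∧ v ≤ t ∧ c = ‖f v - f u‖ / (v - u) ^ β}

set_option maxHeartbeats 1600000 in
/-- **A priori Hölder bound, uniform in `n`, for the Euler scheme (`N = 1`).**
Let `X` be `β`-Hölder on `[0,T]` with `β ∈ (1/2,1)` and `V ∈ C¹_b(ℝ^m; ℝ^{m×d})`. For the
Euler-type scheme `Y^n_t = y + ∫_0^t V(Y^n_{⌊s⌋ₙ}) dX_s` on the uniform grid of mesh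
`h = T/n` (so `Y^n_t = Y^n_{t_k} + V(Y^n_{t_k})(X_t - X_{t_k})` on each grid cell),
one has `‖Y^n‖_β ≤ C(V,β,T) max{‖X‖_β, ‖X‖_β^{1/β}}` with `C` independent of `n`. -/
theorem euler_scheme_apriori_holder_bound
    (m d : ℕ) (β T : ℝ) (hβ : β ∈ Set.Ioo (1/2 : ℝ) 1) (hT : 0 < T)
    (V : (Fin m → ℝ) → ((Fin d → ℝ) →L[ℝ] (Fin m → ℝ))) (Cv : ℝ)
    (hVdiff : Differentiable ℝ V)
    (hVb : ∀ y, ‖V y‖ ≤ Cv ∧ ‖fderiv ℝ V y‖ ≤ Cv) :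
    ∃ C : ℝ, 0 < C ∧ ∀ (n : ℕ), 0 < n →
      ∀ (X : ℝ → (Fin d → ℝ)) (Y : ℝ → (Fin m → ℝ)) (y : Fin m → ℝ) (K : ℝ), 0 ≤ K →
      (∀ u v : ℝ, 0 ≤ u → u < v → v ≤ T → ‖X v - X u‖ ≤ K * (v - u) ^ β) →
      Y 0 = y →
      (∀ k : ℕ, k < n → ∀ u : ℝ, (k : ℝ) * T / n ≤ u → u ≤ ((k : ℝ) + 1) * T / n →
        Y u = Y ((k : ℝ) * T / n) + V (Y ((k : ℝ) * T / n)) (X u - X ((k : ℝ) * T / n))) →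
      holderSemi Y 0 T β ≤ C * max K (K ^ (1 / β)) := by
  obtain ⟨hβ1, hβ2⟩ := hβ
  have hβ0 : (0:ℝ) < β := by linarith
  have hβne : β ≠ 0 := ne_of_gt hβ0
  have hCv0 : 0 ≤ Cv := le_trans (norm_nonneg _) (hVb 0).1
  set Cv₁ := Cv + 1 with hCv₁def
  have hCv₁ : 0 < Cv₁ := by linarith
  have hVn : ∀ z, ‖V z‖ ≤ Cv₁ := fun z => le_trans (hVb z).1 (by linarith)
  have hVlip : ∀ z w, ‖V z - V w‖ ≤ Cv₁ * ‖z - w‖ := by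
    intro z w
    exact Convex.norm_image_sub_le_of_norm_fderiv_le (fun x _ => hVdiff x)
      (fun x _ => le_trans (hVb x).2 (by linarith)) convex_univ (Set.mem_univ w)
      (Set.mem_univ z)
  have h2β1 : 1 < 2*β := by linarith
  have hden : (0:ℝ) < (2:ℝ)^(2*β) - 2 := by
    have h2 : (2:ℝ)^(1:ℝ) < (2:ℝ)^(2*β) :=
      (Real.rpow_lt_rpow_left_iff (by norm_num)).mpr h2β1
    rw [Real.rpow_one] at h2; linarith
  set den := (2:ℝ)^(2*β) - 2 with hdendef
  set γ := den/2 with hγdef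
  have hγ : 0 < γ := by positivity
  set θ := (2:ℝ)^(-β) with hθdef
  have hθ0 : 0 < θ := Real.rpow_pos_of_pos two_pos _
  have hθ1 : θ < 1 := Real.rpow_lt_one_of_one_lt_of_neg (by norm_num) (by linarith)
  have h1θ : 0 < 1 - θ := by linarith
  set c := 2*Cv₁*(1 + 1/(1-θ)) with hcdef
  have hcpos : 0 < c := by
    have h1 : 0 < 1/(1-θ) := by positivity
    rw [hcdef]
    have h2 : (0:ℝ) < 2*Cv₁ := by linarith
    exact mul_pos h2 (by linarith)
  set C := 3*c + 2*c*T^(1-β)*(Cv₁/γ)^((1-β)/β) with hCdef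
  have hC : 0 < C := by
    have h1 : (0:ℝ) ≤ T^(1-β) := Real.rpow_nonneg hT.le _
    have h2 : (0:ℝ) ≤ (Cv₁/γ)^((1-β)/β) := Real.rpow_nonneg (by positivity) _
    have h3 := mul_nonneg (mul_nonneg (by linarith : (0:ℝ) ≤ 2*c) h1) h2
    rw [hCdef]
    linarith
  refine ⟨C, hC, ?_⟩
  intro n hn X Y y K hK hX hY0 hY
  have hn0 : (0:ℝ) < n := by exact_mod_cast hn
  set δ := T/(n:ℝ) with hδdef
  have hδ : 0 < δ := by positivity
  set g : ℕ → ℝ := fun k => (k:ℝ)*T/(n:ℝ) with hgdef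
  have hgδ : ∀ k : ℕ, g k = (k:ℝ)*δ := by
    intro k; simp only [hgdef, hδdef]; ring
  have hgnn : ∀ a:ℕ, 0 ≤ g a := by
    intro a; rw [hgδ]; positivity
  have hgmono : ∀ a b : ℕ, a ≤ b → g a ≤ g b := by
    intro a b hab
    rw [hgδ, hgδ]
    have : (a:ℝ) ≤ b := by exact_mod_cast hab
    exact mul_le_mul_of_nonneg_right this hδ.le
  have hgn : g n = T := by
    simp only [hgdef]; field_simp
  have hgT : ∀ a : ℕ, a ≤ n → g a ≤ T := by
    intro a ha; rw [← hgn]; exact hgmono _ _ ha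
  have hgdiff : ∀ a p : ℕ, g (a+p) = g a + (p:ℝ)*δ := by
    intro a p; rw [hgδ, hgδ]; push_cast; ring
  have hgap : ∀ a b : ℕ, a ≤ b → g b - g a = ((b-a:ℕ):ℝ)*δ := by
    intro a b hab
    have h1 := hgdiff a (b-a)
    rw [show a + (b-a) = b from by omega] at h1
    rw [h1]; ring
  have hYc : ∀ k : ℕ, k < n → ∀ u, g k ≤ u → u ≤ g (k+1) →
      Y u = Y (g k) + V (Y (g k)) (X u - X (g k)) := by
    intro k hk u h1 h2
    have e : g (k+1) = ((k:ℝ)+1)*T/(n:ℝ) := by simp only [hgdef]; push_cast; ring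
    exact hY k hk u h1 (by rw [← e]; exact h2)
  have hXg : ∀ a b : ℕ, a < b → b ≤ n → ‖X (g b) - X (g a)‖ ≤ K * (g b - g a)^β := by
    intro a b hab hbn
    have hlt : g a < g b := by
      have := hgap a b hab.le
      have hpos : (0:ℝ) < ((b-a:ℕ):ℝ) := by
        have : 0 < b - a := by omega
        exact_mod_cast this
      have := mul_pos hpos hδ
      linarith
    exact hX (g a) (g b) (hgnn a) hlt (hgT b hbn)
  -- split on K = 0
  rcases hK.eq_or_lt with hK0 | hKpos
  · -- K = 0 : Y is constant
    have hXc : ∀ u v : ℝ, 0 ≤ u → u < v → v ≤ T → X v - X u = 0 := by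
      intro u v h1 h2 h3
      have h4 := hX u v h1 h2 h3
      rw [← hK0, zero_mul] at h4
      exact norm_le_zero_iff.mp h4
    have hgrid : ∀ k : ℕ, k ≤ n → Y (g k) = Y 0 := by
      intro k
      induction k with
      | zero => intro _; congr 1; simp [hgδ]
      | succ k ih =>
        intro hk
        have hk' : k < n := by omega
        have e := hYc k hk' (g (k+1)) (hgmono _ _ (Nat.le_succ k)) le_rfl
        have hlt : g k < g (k+1) := by
          have h5 := hgdiff k 1
          push_cast at h5
          linarith
        have hx0 : X (g (k+1)) - X (g k) = 0 :=
          hXc _ _ (hgnn k) hlt (hgT _ hk)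
        rw [hx0, map_zero, add_zero] at e
        rw [e]; exact ih (by omega)
    have hpt : ∀ u : ℝ, 0 ≤ u → u ≤ T → Y u = Y 0 := by
      intro u h1 h2
      set k := min (n-1) (Nat.floor (u/δ)) with hkdef
      have hkn : k < n := by
        have : k ≤ n - 1 := min_le_left _ _
        omega
      have hk1 : g k ≤ u := by
        rw [hgδ]
        have ha : (k:ℝ) ≤ u/δ := by
          calc (k:ℝ) ≤ (Nat.floor (u/δ) : ℝ) := by
                exact_mod_cast min_le_right _ _
            _ ≤ u/δ := Nat.floor_le (by positivity)
        calc (k:ℝ)*δ ≤ (u/δ)*δ := mul_le_mul_of_nonneg_right ha hδ.le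
          _ = u := div_mul_cancel₀ u hδ.ne'
      have hk2 : u ≤ g (k+1) := by
        rcases le_or_gt (Nat.floor (u/δ)) (n-1) with hc | hc
        · have hkk : k = Nat.floor (u/δ) := min_eq_right hc
          have h3 : u/δ < (Nat.floor (u/δ) : ℝ) + 1 := by
            exact_mod_cast Nat.lt_succ_floor (u/δ)
          have h4 : u < ((Nat.floor (u/δ) : ℝ) + 1)*δ := (div_lt_iff₀ hδ).mp h3
          rw [hgδ]
          push_cast [hkk]
          linarith
        · have hkk : k = n - 1 := min_eq_left hc.le
          have he : (k+1) = n := by omega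
          rw [he, hgn]; exact h2
      have e := hYc k hkn u hk1 hk2
      have hx0 : X u - X (g k) = 0 := by
        rcases hk1.eq_or_lt with h | h
        · rw [h, sub_self]
        · exact hXc _ _ (hgnn k) h h2
      rw [hx0, map_zero, add_zero] at e
      rw [e]; exact hgrid k (by omega)
    apply Real.sSup_le
    · rintro x ⟨u, v, h1, h2, h3, rfl⟩
      have hz : Y v - Y u = 0 := by
        rw [hpt v (by linarith) h3, hpt u h1 (by linarith), sub_self]
      rw [hz, norm_zero, zero_div]
      have : (0:ℝ) ≤ max K (K ^ (1/β)) := le_trans hK (le_max_left _ _)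
      positivity
    · have : (0:ℝ) ≤ max K (K ^ (1/β)) := le_trans hK (le_max_left _ _)
      positivity
  · -- main case K > 0
    have hCK : (0:ℝ) ≤ Cv₁*K := (mul_pos hCv₁ hKpos).le
    set M := 2*Cv₁*K with hMdef
    have hM : 0 < M := by rw [hMdef]; linarith [mul_pos hCv₁ hKpos]
    set D := Cv₁*M*K/den with hDdef
    have hD : 0 < D := by
      rw [hDdef]; exact div_pos (mul_pos (mul_pos hCv₁ hM) hKpos) hden
    set b := (γ/(Cv₁*K))^(1/β) with hbdef
    have hb : 0 < b := Real.rpow_pos_of_pos (div_pos hγ (mul_pos hCv₁ hKpos)) _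
    set τ := min T b with hτdef
    have hτ : 0 < τ := lt_min hT hb
    have hτT : τ ≤ T := min_le_left _ _
    have hτγ : Cv₁*K*τ^β ≤ γ := by
      have h1 : τ^β ≤ b^β :=
        Real.rpow_le_rpow hτ.le (min_le_right _ _) hβ0.le
      have h2 : b^β = γ/(Cv₁*K) := by
        rw [hbdef, ← Real.rpow_mul (div_nonneg hγ.le hCK),
          one_div_mul_cancel hβne, Real.rpow_one]
      have h3 : Cv₁*K*(γ/(Cv₁*K)) = γ := by
        field_simp
      calc Cv₁*K*τ^β ≤ Cv₁*K*(b^β) := mul_le_mul_of_nonneg_left h1 hCK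
        _ = γ := by rw [h2, h3]
    have hDτ : D*τ^β ≤ Cv₁*K := by
      have e : D*τ^β = M/den*(Cv₁*K*τ^β) := by rw [hDdef]; ring
      have h1 : (0:ℝ) ≤ M/den := (div_pos hM hden).le
      calc D*τ^β = M/den*(Cv₁*K*τ^β) := e
        _ ≤ M/den*γ := mul_le_mul_of_nonneg_left hτγ h1
        _ = Cv₁*K := by
            rw [hγdef, hMdef]; field_simp
    have hgpow : ∀ a j : ℕ, g (a + 2^j) - g a = (2:ℝ)^j * δ := by
      intro a j; rw [hgdiff]; push_cast; ring
    -- from the A-bound to the B-bound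
    have hAtoB : ∀ a bb : ℕ, a < bb → bb ≤ n → g bb - g a ≤ τ →
        ‖Y (g bb) - Y (g a) - V (Y (g a)) (X (g bb) - X (g a))‖ ≤ D*(g bb - g a)^(2*β) →
        ‖Y (g bb) - Y (g a)‖ ≤ M*(g bb - g a)^β := by
      intro a bb hab hbn hsτ hAb
      have hs : 0 < g bb - g a := by
        have h1 := hgap a bb hab.le
        have h2 : (0:ℝ) < ((bb-a:ℕ):ℝ) := by
          have : 0 < bb - a := by omega
          exact_mod_cast this
        have := mul_pos h2 hδ
        linarith
      set s := g bb - g a with hs_def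
      have hXb : ‖X (g bb) - X (g a)‖ ≤ K*s^β := hXg a bb hab hbn
      have hop : ‖V (Y (g a)) (X (g bb) - X (g a))‖ ≤ Cv₁*K*s^β := by
        rw [mul_assoc]
        exact le_trans (ContinuousLinearMap.le_opNorm _ _)
          (mul_le_mul (hVn _) hXb (norm_nonneg _) hCv₁.le)
      have htri : ‖Y (g bb) - Y (g a)‖ ≤ D*s^(2*β) + Cv₁*K*s^β := by
        have e : Y (g bb) - Y (g a) =
            (Y (g bb) - Y (g a) - V (Y (g a)) (X (g bb) - X (g a)))
            + V (Y (g a)) (X (g bb) - X (g a)) := by abel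
        rw [e]
        exact le_trans (norm_add_le _ _) (add_le_add hAb hop)
      have hss : s^(2*β) = s^β*s^β := by
        rw [← Real.rpow_add hs]; ring_nf
      have h1 : s^β ≤ τ^β := Real.rpow_le_rpow hs.le hsτ hβ0.le
      have h2 : (0:ℝ) ≤ s^β := Real.rpow_nonneg hs.le _
      have h3 : D*s^(2*β) ≤ Cv₁*K*s^β := by
        rw [hss]
        calc D*(s^β*s^β) = (D*s^β)*s^β := by ring
          _ ≤ (D*τ^β)*s^β :=
              mul_le_mul_of_nonneg_right (mul_le_mul_of_nonneg_left h1 hD.le) h2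
          _ ≤ (Cv₁*K)*s^β := mul_le_mul_of_nonneg_right hDτ h2
          _ = Cv₁*K*s^β := by ring
      calc ‖Y (g bb) - Y (g a)‖ ≤ D*s^(2*β) + Cv₁*K*s^β := htri
        _ ≤ Cv₁*K*s^β + Cv₁*K*s^β := by linarith
        _ = M*s^β := by rw [hMdef]; ring
    -- dyadic Davie induction
    have hA : ∀ j : ℕ, ∀ a : ℕ, a + 2^j ≤ n → (2:ℝ)^j*δ ≤ τ →
        ‖Y (g (a+2^j)) - Y (g a) - V (Y (g a)) (X (g (a+2^j)) - X (g a))‖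
          ≤ D*((2:ℝ)^j*δ)^(2*β) := by
      intro j
      induction j with
      | zero =>
        intro a ha hτ'
        have ha' : a + 1 ≤ n := by rw [pow_zero] at ha; exact ha
        have h1 : a + 2^0 = a + 1 := by norm_num
        rw [h1]
        have e := hYc a (by omega) (g (a+1)) (hgmono _ _ (Nat.le_succ a)) le_rfl
        rw [e]
        have h2 : (Y (g a) + V (Y (g a)) (X (g (a+1)) - X (g a))) - Y (g a)
            - V (Y (g a)) (X (g (a+1)) - X (g a)) = 0 := by abel
        rw [h2, norm_zero]
        have : (0:ℝ) ≤ (2:ℝ)^(0:ℕ)*δ := by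
          have := hδ.le; norm_num; linarith
        exact mul_nonneg hD.le (Real.rpow_nonneg this _)
      | succ j ih =>
        intro a ha hτ'
        have hp2 : (2:ℕ)^(j+1) = 2^j + 2^j := by rw [pow_succ]; ring
        have hp0 : 0 < (2:ℕ)^j := pow_pos (by norm_num) j
        have h2s : (2:ℝ)^(j+1)*δ = 2*((2:ℝ)^j*δ) := by rw [pow_succ]; ring
        set s := (2:ℝ)^j*δ with hsdef
        have hs : 0 < s := by
          rw [hsdef]; exact mul_pos (pow_pos (by norm_num) j) hδ
        have hsτ : s ≤ τ := by rw [h2s] at hτ'; linarith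
        have h1 : a + 2^j ≤ n := by omega
        have e1 := ih a h1 hsτ
        have e2 := ih (a+2^j) (by omega) hsτ
        have hBj : ‖Y (g (a+2^j)) - Y (g a)‖ ≤ M*s^β := by
          have hp0 : 0 < (2:ℕ)^j := pow_pos (by norm_num) j
          have h3 := hAtoB a (a+2^j) (by omega) h1
            (by rw [hgpow a j]; exact hsτ) (by rw [hgpow a j]; exact e1)
          rw [hgpow a j] at h3
          exact h3
        have hf : ‖V (Y (g (a+2^j))) - V (Y (g a))‖ ≤ Cv₁*(M*s^β) :=
          le_trans (hVlip _ _) (mul_le_mul_of_nonneg_left hBj hCv₁.le)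
        have hX2 : ‖X (g (a+2^(j+1))) - X (g (a+2^j))‖ ≤ K*s^β := by
          have hp0 : 0 < (2:ℕ)^j := pow_pos (by norm_num) j
          have h4 := hXg (a+2^j) (a+2^(j+1)) (by omega) ha
          have h5 : g (a+2^(j+1)) - g (a+2^j) = s := by
            have h6 := hgpow (a+2^j) j
            rw [show (a+2^j) + 2^j = a + 2^(j+1) from by omega] at h6
            exact h6
          rw [h5] at h4; exact h4
        have hiden : Y (g (a+2^(j+1))) - Y (g a)
            - V (Y (g a)) (X (g (a+2^(j+1))) - X (g a)) =
            (Y (g (a+2^j)) - Y (g a) - V (Y (g a)) (X (g (a+2^j)) - X (g a)))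
            + (Y (g (a+2^(j+1))) - Y (g (a+2^j))
               - V (Y (g (a+2^j))) (X (g (a+2^(j+1))) - X (g (a+2^j))))
            + ((V (Y (g (a+2^j))) - V (Y (g a))) (X (g (a+2^(j+1))) - X (g (a+2^j)))) := by
          simp only [map_sub, ContinuousLinearMap.sub_apply]
          abel
        have e2' : ‖Y (g (a+2^(j+1))) - Y (g (a+2^j))
            - V (Y (g (a+2^j))) (X (g (a+2^(j+1))) - X (g (a+2^j)))‖ ≤ D*s^(2*β) := by
          have h7 := e2
          rw [show (a+2^j) + 2^j = a + 2^(j+1) from by omega] at h7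
          exact h7
        have hcross : ‖(V (Y (g (a+2^j))) - V (Y (g a)))
            (X (g (a+2^(j+1))) - X (g (a+2^j)))‖ ≤ (Cv₁*(M*s^β))*(K*s^β) := by
          have hnn : (0:ℝ) ≤ Cv₁*(M*s^β) :=
            mul_nonneg hCv₁.le (mul_nonneg hM.le (Real.rpow_nonneg hs.le _))
          exact le_trans (ContinuousLinearMap.le_opNorm _ _)
            (mul_le_mul hf hX2 (norm_nonneg _) hnn)
        have hss : s^(2*β) = s^β*s^β := by
          rw [← Real.rpow_add hs]; ring_nf
        have hfin : D*s^(2*β) + D*s^(2*β) + (Cv₁*(M*s^β))*(K*s^β)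
            = D*((2:ℝ)^(j+1)*δ)^(2*β) := by
          rw [h2s, Real.mul_rpow (by norm_num : (0:ℝ) ≤ 2) hs.le]
          have hDden : D*den = Cv₁*M*K := by
            rw [hDdef]; field_simp
          have h2b : (2:ℝ)^(2*β) = den + 2 := by rw [hdendef]; ring
          rw [h2b, hss]
          linear_combination (-(s^β*s^β)) * hDden
        calc ‖Y (g (a+2^(j+1))) - Y (g a)
              - V (Y (g a)) (X (g (a+2^(j+1))) - X (g a))‖
            = ‖(Y (g (a+2^j)) - Y (g a) - V (Y (g a)) (X (g (a+2^j)) - X (g a)))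
              + (Y (g (a+2^(j+1))) - Y (g (a+2^j))
                 - V (Y (g (a+2^j))) (X (g (a+2^(j+1))) - X (g (a+2^j))))
              + ((V (Y (g (a+2^j))) - V (Y (g a)))
                 (X (g (a+2^(j+1))) - X (g (a+2^j))))‖ := by rw [hiden]
          _ ≤ D*s^(2*β) + D*s^(2*β) + (Cv₁*(M*s^β))*(K*s^β) := by
              refine le_trans (norm_add_le _ _) ?_
              exact add_le_add (le_trans (norm_add_le _ _) (add_le_add e1 e2')) hcross
          _ = D*((2:ℝ)^(j+1)*δ)^(2*β) := hfin
    have hB : ∀ j a : ℕ, a + 2^j ≤ n → (2:ℝ)^j*δ ≤ τ →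
        ‖Y (g (a+2^j)) - Y (g a)‖ ≤ M*((2:ℝ)^j*δ)^β := by
      intro j a ha hτ'
      have hp0 : 0 < (2:ℕ)^j := pow_pos (by norm_num) j
      have h3 := hAtoB a (a+2^j) (by omega) ha
        (by rw [hgpow a j]; exact hτ') (by rw [hgpow a j]; exact hA j a ha hτ')
      rw [hgpow a j] at h3
      exact h3
    set M' := M/(1-θ) with hM'def
    have hM' : 0 < M' := by rw [hM'def]; exact div_pos hM h1θ
    -- arbitrary grid spans by binary decomposition
    have hQ : ∀ r : ℕ, ∀ a : ℕ, a + r ≤ n → (r:ℝ)*δ ≤ τ →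
        ‖Y (g (a+r)) - Y (g a)‖ ≤ M'*((r:ℝ)*δ)^β := by
      intro r
      induction r using Nat.strong_induction_on with
      | _ r ih =>
        intro a ha hτ'
        rcases Nat.eq_zero_or_pos r with hr0 | hr1
        · subst hr0
          simp [Real.zero_rpow hβne]
        · have hj2 : (2:ℕ)^(Nat.log 2 r) ≤ r := Nat.pow_log_le_self 2 (by omega)
          have hj2' : r < 2^(Nat.log 2 r + 1) :=
            Nat.lt_pow_succ_log_self (by norm_num) r
          set j := Nat.log 2 r with hjdef
          have hp2 : (2:ℕ)^(j+1) = 2^j + 2^j := by rw [pow_succ]; ring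
          have hp0 : 0 < (2:ℕ)^j := pow_pos (by norm_num) j
          set r' := r - 2^j with hr'def
          have hsplit : a + r = (a + 2^j) + r' := by omega
          have hrr : 2*r' ≤ r := by omega
          have hr'cast : (r':ℝ) ≤ (r:ℝ)/2 := by
            have : ((2*r' : ℕ):ℝ) ≤ (r:ℝ) := by exact_mod_cast hrr
            push_cast at this
            linarith
          have hr'τ : (r':ℝ)*δ ≤ τ := by
            have h1 : (r':ℝ) ≤ (r:ℝ) := by
              have : r' ≤ r := by omega
              exact_mod_cast this
            have := mul_le_mul_of_nonneg_right h1 hδ.le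
            linarith
          have hb1 : ‖Y (g (a+r)) - Y (g (a+2^j))‖ ≤ M'*((r':ℝ)*δ)^β := by
            have h1 := ih r' (by omega) (a+2^j) (by omega) hr'τ
            rw [← hsplit] at h1
            exact h1
          have h2jr : (2:ℝ)^j ≤ (r:ℝ) := by
            have : ((2^j : ℕ):ℝ) ≤ (r:ℝ) := by exact_mod_cast hj2
            push_cast at this
            exact this
          have hb2 : ‖Y (g (a+2^j)) - Y (g a)‖ ≤ M*((2:ℝ)^j*δ)^β := by
            refine hB j a (by omega) ?_
            have := mul_le_mul_of_nonneg_right h2jr hδ.le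
            linarith
          have htri : ‖Y (g (a+r)) - Y (g a)‖
              ≤ M'*((r':ℝ)*δ)^β + M*((2:ℝ)^j*δ)^β := by
            calc ‖Y (g (a+r)) - Y (g a)‖
                ≤ ‖Y (g (a+r)) - Y (g (a+2^j))‖ + ‖Y (g (a+2^j)) - Y (g a)‖ :=
                  norm_sub_le_norm_sub_add_norm_sub _ _ _
              _ ≤ _ := add_le_add hb1 hb2
          set w := (r:ℝ)*δ with hwdef
          have hrpos : (0:ℝ) < (r:ℝ) := by exact_mod_cast hr1
          have hw : 0 < w := by rw [hwdef]; exact mul_pos hrpos hδ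
          have ha1 : (r':ℝ)*δ ≤ w/2 := by
            rw [hwdef]
            have := mul_le_mul_of_nonneg_right hr'cast hδ.le
            calc (r':ℝ)*δ ≤ (r:ℝ)/2*δ := this
              _ = (r:ℝ)*δ/2 := by ring
          have hr'nn : (0:ℝ) ≤ (r':ℝ)*δ := mul_nonneg (Nat.cast_nonneg _) hδ.le
          have ha2 : ((r':ℝ)*δ)^β ≤ θ*w^β := by
            have h5 : ((r':ℝ)*δ)^β ≤ (w/2)^β := Real.rpow_le_rpow hr'nn ha1 hβ0.le
            have h6 : (w/2)^β = w^β*θ := by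
              rw [Real.div_rpow hw.le (by norm_num : (0:ℝ) ≤ 2)]
              rw [hθdef, Real.rpow_neg (by norm_num : (0:ℝ) ≤ 2)]
              ring
            rw [h6] at h5
            linarith
          have ha3 : ((2:ℝ)^j*δ)^β ≤ w^β := by
            refine Real.rpow_le_rpow ?_ ?_ hβ0.le
            · exact mul_nonneg (pow_nonneg (by norm_num) j) hδ.le
            · rw [hwdef]
              exact mul_le_mul_of_nonneg_right h2jr hδ.le
          have hMM : M'*θ + M = M' := by
            rw [hM'def]
            field_simp
            ring
          have hwnn : (0:ℝ) ≤ w^β := Real.rpow_nonneg hw.le _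
          calc ‖Y (g (a+r)) - Y (g a)‖
              ≤ M'*((r':ℝ)*δ)^β + M*((2:ℝ)^j*δ)^β := htri
            _ ≤ M'*(θ*w^β) + M*w^β :=
                add_le_add (mul_le_mul_of_nonneg_left ha2 hM'.le)
                  (mul_le_mul_of_nonneg_left ha3 hM.le)
            _ = (M'*θ + M)*w^β := by ring
            _ = M'*w^β := by rw [hMM]
    -- within one cell
    have hcell : ∀ k : ℕ, k < n → ∀ u v : ℝ, g k ≤ u → u ≤ v → v ≤ g (k+1) →
        ‖Y v - Y u‖ ≤ Cv₁*K*(v-u)^β := by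
      intro k hk u v h1 h2 h3
      rcases h2.eq_or_lt with he | hlt
      · rw [he]
        simp [Real.zero_rpow hβne]
      · have e1 := hYc k hk u h1 (le_trans h2 h3)
        have e2 := hYc k hk v (le_trans h1 h2) h3
        have hid : Y v - Y u = V (Y (g k)) (X v - X u) := by
          rw [e1, e2]
          simp only [map_sub]
          abel
        rw [hid]
        have hu0 : 0 ≤ u := le_trans (hgnn k) h1
        have hvT : v ≤ T := le_trans h3 (hgT (k+1) (by omega))
        calc ‖V (Y (g k)) (X v - X u)‖
            ≤ ‖V (Y (g k))‖*‖X v - X u‖ := ContinuousLinearMap.le_opNorm _ _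
          _ ≤ Cv₁*(K*(v-u)^β) :=
              mul_le_mul (hVn _) (hX u v hu0 hlt hvT) (norm_nonneg _) hCv₁.le
          _ = Cv₁*K*(v-u)^β := by ring
    set M₂ := M + M' with hM₂def
    have hM₂ : 0 < M₂ := by rw [hM₂def]; linarith
    -- short range: v - u ≤ τ
    have hshort : ∀ u v : ℝ, 0 ≤ u → u < v → v ≤ T → v - u ≤ τ →
        ‖Y v - Y u‖ ≤ M₂*(v-u)^β := by
      intro u v hu huv hv hvuτ
      have huT : u < T := lt_of_lt_of_le huv hv
      have hvu0 : (0:ℝ) ≤ v - u := by linarith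
      have hWnn : (0:ℝ) ≤ (v-u)^β := Real.rpow_nonneg hvu0 _
      have hudnn : (0:ℝ) ≤ u/δ := div_nonneg hu hδ.le
      have hvdnn : (0:ℝ) ≤ v/δ := div_nonneg (by linarith) hδ.le
      set k := Nat.floor (u/δ) with hkdef
      have hk1 : g k ≤ u := by
        rw [hgδ]
        have ha : (k:ℝ) ≤ u/δ := Nat.floor_le hudnn
        calc (k:ℝ)*δ ≤ (u/δ)*δ := mul_le_mul_of_nonneg_right ha hδ.le
          _ = u := div_mul_cancel₀ u hδ.ne'
      have hk2 : u < g (k+1) := by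
        have h3 : u/δ < (k:ℝ) + 1 := by exact_mod_cast Nat.lt_succ_floor (u/δ)
        have h4 : u < ((k:ℝ)+1)*δ := (div_lt_iff₀ hδ).mp h3
        rw [hgδ]; push_cast; linarith
      have hkn : k < n := by
        have h5 : u/δ < (n:ℝ) := by
          rw [div_lt_iff₀ hδ]
          have h6 : (n:ℝ)*δ = T := by rw [hδdef]; field_simp
          linarith
        exact (Nat.floor_lt hudnn).mpr h5
      set l := min (n-1) (Nat.floor (v/δ)) with hldef
      have hln : l < n := by
        have := min_le_left (n-1) (Nat.floor (v/δ)); omega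
      have hl1 : g l ≤ v := by
        rw [hgδ]
        have ha : (l:ℝ) ≤ v/δ := by
          calc (l:ℝ) ≤ (Nat.floor (v/δ):ℝ) := by exact_mod_cast min_le_right _ _
            _ ≤ v/δ := Nat.floor_le hvdnn
        calc (l:ℝ)*δ ≤ (v/δ)*δ := mul_le_mul_of_nonneg_right ha hδ.le
          _ = v := div_mul_cancel₀ v hδ.ne'
      have hl2 : v ≤ g (l+1) := by
        rcases le_or_gt (Nat.floor (v/δ)) (n-1) with hc | hc
        · have hkk : l = Nat.floor (v/δ) := min_eq_right hc
          have h3 : v/δ < (Nat.floor (v/δ):ℝ) + 1 := by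
            exact_mod_cast Nat.lt_succ_floor (v/δ)
          have h4 : v < ((Nat.floor (v/δ):ℝ) + 1)*δ := (div_lt_iff₀ hδ).mp h3
          rw [hgδ]
          push_cast [hkk]
          linarith
        · have hkk : l = n - 1 := min_eq_left hc.le
          have he : (l+1) = n := by omega
          rw [he, hgn]; exact hv
      have hkl : k ≤ l := by
        refine le_min (by omega) (Nat.floor_mono ?_)
        rw [div_eq_mul_inv, div_eq_mul_inv]
        exact mul_le_mul_of_nonneg_right huv.le (by positivity)
      rcases eq_or_lt_of_le hkl with hkeq | hklt
      · have h6 := hcell k hkn u v hk1 huv.le (by rw [hkeq]; exact hl2)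
        refine le_trans h6 (mul_le_mul_of_nonneg_right ?_ hWnn)
        rw [hM₂def, hMdef]
        linarith [mul_pos hCv₁ hKpos, hM']
      · have hk1l : k + 1 ≤ l := hklt
        have hgkl : g (k+1) ≤ g l := hgmono _ _ hk1l
        have t3 := hcell k hkn u (g (k+1)) hk1 hk2.le le_rfl
        have t1 := hcell l hln (g l) v le_rfl hl1 hl2
        have hgap2 : ((l-(k+1):ℕ):ℝ)*δ = g l - g (k+1) := (hgap (k+1) l hk1l).symm
        have ht2cond : ((l-(k+1):ℕ):ℝ)*δ ≤ τ := by
          rw [hgap2]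
          have : g l ≤ v := hl1
          linarith [hk2]
        have t2 := hQ (l-(k+1)) (k+1) (by omega) ht2cond
        rw [show (k+1) + (l-(k+1)) = l from by omega] at t2
        rw [hgap2] at t2
        have hb1 : (v - g l)^β ≤ (v-u)^β :=
          Real.rpow_le_rpow (by linarith) (by linarith [hk2, hgkl]) hβ0.le
        have hb2 : (g l - g (k+1))^β ≤ (v-u)^β :=
          Real.rpow_le_rpow (by linarith) (by linarith [hk2, hl1]) hβ0.le
        have hb3 : (g (k+1) - u)^β ≤ (v-u)^β :=
          Real.rpow_le_rpow (by linarith [hk2]) (by linarith [hl1, hgkl]) hβ0.le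
        have htri : ‖Y v - Y u‖
            ≤ ‖Y v - Y (g l)‖ + ‖Y (g l) - Y (g (k+1))‖ + ‖Y (g (k+1)) - Y u‖ := by
          have h7 : Y v - Y u =
              (Y v - Y (g l)) + (Y (g l) - Y (g (k+1))) + (Y (g (k+1)) - Y u) := by abel
          rw [h7]
          exact norm_add₃_le
        have c1 : ‖Y v - Y (g l)‖ ≤ Cv₁*K*(v-u)^β :=
          le_trans t1 (mul_le_mul_of_nonneg_left hb1 hCK)
        have c2 : ‖Y (g l) - Y (g (k+1))‖ ≤ M'*(v-u)^β :=
          le_trans t2 (mul_le_mul_of_nonneg_left hb2 hM'.le)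
        have c3 : ‖Y (g (k+1)) - Y u‖ ≤ Cv₁*K*(v-u)^β :=
          le_trans t3 (mul_le_mul_of_nonneg_left hb3 hCK)
        calc ‖Y v - Y u‖
            ≤ ‖Y v - Y (g l)‖ + ‖Y (g l) - Y (g (k+1))‖ + ‖Y (g (k+1)) - Y u‖ := htri
          _ ≤ Cv₁*K*(v-u)^β + M'*(v-u)^β + Cv₁*K*(v-u)^β := by linarith
          _ = M₂*(v-u)^β := by rw [hM₂def, hMdef]; ring
    -- chaining
    have hchain : ∀ N : ℕ, ∀ u v : ℝ, 0 ≤ u → u < v → v ≤ T → v - u ≤ (N:ℝ)*τ →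
        ‖Y v - Y u‖ ≤ (N:ℝ)*(M₂*τ^β) := by
      intro N
      induction N with
      | zero =>
        intro u v hu huv hv hle
        exfalso
        push_cast at hle
        linarith
      | succ N ih =>
        intro u v hu huv hv hle
        have hτβnn : (0:ℝ) ≤ M₂*τ^β := mul_nonneg hM₂.le (Real.rpow_nonneg hτ.le _)
        rcases le_or_gt (v-u) τ with hc | hc
        · have h8 := hshort u v hu huv hv hc
          have h9 : (v-u)^β ≤ τ^β := Real.rpow_le_rpow (by linarith) hc hβ0.le
          have h10 : ‖Y v - Y u‖ ≤ M₂*τ^β :=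
            le_trans h8 (mul_le_mul_of_nonneg_left h9 hM₂.le)
          push_cast
          linarith [mul_nonneg (Nat.cast_nonneg (α := ℝ) N) hτβnn]
        · have hw1 : u < v - τ := by linarith
          have hw2 : 0 ≤ v - τ := le_of_lt (lt_of_le_of_lt hu hw1)
          have hw3 : v - τ < v := by linarith
          have hw4 : v - τ ≤ T := by linarith
          have c1 := hshort (v - τ) v hw2 hw3 hv (by linarith)
          have hvw : v - (v - τ) = τ := by ring
          rw [hvw] at c1
          have c2 := ih u (v - τ) hu hw1 hw4 (by push_cast at hle; linarith)
          have htri : ‖Y v - Y u‖ ≤ ‖Y v - Y (v - τ)‖ + ‖Y (v - τ) - Y u‖ :=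
            norm_sub_le_norm_sub_add_norm_sub _ _ _
          push_cast
          linarith
    -- full range
    set E := 2*T^(1-β)*τ^(β-1) with hEdef
    have hE : 0 ≤ E := by
      rw [hEdef]
      exact mul_nonneg (mul_nonneg (by norm_num) (Real.rpow_nonneg hT.le _))
        (Real.rpow_nonneg hτ.le _)
    set M₃ := M₂*(1+E) with hM₃def
    have hlong : ∀ u v : ℝ, 0 ≤ u → u < v → v ≤ T → ‖Y v - Y u‖ ≤ M₃*(v-u)^β := by
      intro u v hu huv hv
      have hvu : 0 < v - u := by linarith
      have hWnn : (0:ℝ) ≤ (v-u)^β := Real.rpow_nonneg hvu.le _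
      rcases le_or_gt (v-u) τ with hc | hc
      · have h8 := hshort u v hu huv hv hc
        have h9 : M₂ ≤ M₃ := by
          rw [hM₃def]
          linarith [mul_nonneg hM₂.le hE]
        exact le_trans h8 (mul_le_mul_of_nonneg_right h9 hWnn)
      · set N := Nat.ceil ((v-u)/τ) with hNdef
        have hN1 : v - u ≤ (N:ℝ)*τ := by
          have h10 := Nat.le_ceil ((v-u)/τ)
          rw [div_le_iff₀ hτ] at h10
          exact h10
        have hN2 : (N:ℝ) ≤ 2*((v-u)/τ) := by
          have h12 := Nat.ceil_lt_add_one (show (0:ℝ) ≤ (v-u)/τ from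
            div_nonneg hvu.le hτ.le)
          have h13 : (1:ℝ) < (v-u)/τ := (one_lt_div hτ).mpr hc
          linarith
        have h14 := hchain N u v hu huv hv hN1
        have h15 : (0:ℝ) ≤ M₂*τ^β := mul_nonneg hM₂.le (Real.rpow_nonneg hτ.le _)
        have h16 : ‖Y v - Y u‖ ≤ 2*((v-u)/τ)*(M₂*τ^β) :=
          le_trans h14 (mul_le_mul_of_nonneg_right hN2 h15)
        have h17 : τ^β/τ = τ^(β-1) := by
          rw [Real.rpow_sub hτ, Real.rpow_one]
        have h18 : 2*((v-u)/τ)*(M₂*τ^β) = 2*M₂*(v-u)*(τ^(β-1)) := by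
          rw [← h17]
          field_simp
        have h19 : v - u ≤ T^(1-β)*(v-u)^β := by
          have h20 : (v-u) = (v-u)^β*(v-u)^(1-β) := by
            rw [← Real.rpow_add hvu, show β+(1-β) = 1 by ring, Real.rpow_one]
          have h21 : (v-u)^(1-β) ≤ T^(1-β) :=
            Real.rpow_le_rpow hvu.le (by linarith) (by linarith)
          calc v - u = (v-u)^β*(v-u)^(1-β) := h20
            _ ≤ (v-u)^β*T^(1-β) := mul_le_mul_of_nonneg_left h21 hWnn
            _ = T^(1-β)*(v-u)^β := by ring
        have hτ1 : (0:ℝ) ≤ τ^(β-1) := Real.rpow_nonneg hτ.le _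
        have h22 : 2*M₂*(v-u)*(τ^(β-1)) ≤ 2*M₂*(T^(1-β)*(v-u)^β)*(τ^(β-1)) := by
          refine mul_le_mul_of_nonneg_right ?_ hτ1
          exact mul_le_mul_of_nonneg_left h19 (by linarith)
        have h23 : 2*M₂*(T^(1-β)*(v-u)^β)*(τ^(β-1)) ≤ M₃*(v-u)^β := by
          rw [hM₃def, hEdef]
          linarith [mul_nonneg hM₂.le hWnn]
        calc ‖Y v - Y u‖ ≤ 2*((v-u)/τ)*(M₂*τ^β) := h16
          _ = 2*M₂*(v-u)*(τ^(β-1)) := h18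
          _ ≤ 2*M₂*(T^(1-β)*(v-u)^β)*(τ^(β-1)) := h22
          _ ≤ M₃*(v-u)^β := h23
    -- the constant bound
    have hmax : (0:ℝ) ≤ max K (K^(1/β)) := le_trans hK (le_max_left _ _)
    have hM₃C : M₃ ≤ C * max K (K^(1/β)) := by
      have hM₂c : M₂ = c*K := by
        rw [hM₂def, hM'def, hMdef, hcdef]
        field_simp
      have hτc : τ^(β-1) ≤ T^(β-1) + b^(β-1) := by
        have hbb : (0:ℝ) ≤ b^(β-1) := Real.rpow_nonneg hb.le _
        have hTb : (0:ℝ) ≤ T^(β-1) := Real.rpow_nonneg hT.le _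
        rcases min_cases T b with ⟨h1, _⟩ | ⟨h1, _⟩
        · have hτe : τ = T := by rw [hτdef, h1]
          rw [hτe]; linarith
        · have hτe : τ = b := by rw [hτdef, h1]
          rw [hτe]; linarith
      have hx : (0:ℝ) < γ/(Cv₁*K) := div_pos hγ (mul_pos hCv₁ hKpos)
      have hKb : K*b^(β-1) = (Cv₁/γ)^((1-β)/β) * K^(1/β) := by
        have h1 : b^(β-1) = (γ/(Cv₁*K))^((β-1)/β) := by
          rw [hbdef, ← Real.rpow_mul hx.le]
          congr 1
          ring
        have h2 : (γ/(Cv₁*K))^((β-1)/β) = ((Cv₁*K)/γ)^((1-β)/β) := by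
          calc (γ/(Cv₁*K))^((β-1)/β)
              = (γ/(Cv₁*K))^(-((1-β)/β)) := by congr 1; ring
            _ = ((γ/(Cv₁*K))^((1-β)/β))⁻¹ := Real.rpow_neg hx.le _
            _ = ((γ/(Cv₁*K))⁻¹)^((1-β)/β) := (Real.inv_rpow hx.le _).symm
            _ = ((Cv₁*K)/γ)^((1-β)/β) := by rw [inv_div]
        have h3 : ((Cv₁*K)/γ)^((1-β)/β) = (Cv₁/γ)^((1-β)/β)*K^((1-β)/β) := by
          rw [show (Cv₁*K)/γ = (Cv₁/γ)*K by ring,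
            Real.mul_rpow (div_nonneg hCv₁.le hγ.le) hKpos.le]
        have h4 : K*K^((1-β)/β) = K^(1/β) := by
          calc K*K^((1-β)/β) = K^(1:ℝ)*K^((1-β)/β) := by rw [Real.rpow_one]
            _ = K^(1 + (1-β)/β) := (Real.rpow_add hKpos _ _).symm
            _ = K^(1/β) := by
                congr 1
                field_simp
                ring
        rw [h1, h2, h3]
        calc K*((Cv₁/γ)^((1-β)/β)*K^((1-β)/β))
            = (Cv₁/γ)^((1-β)/β)*(K*K^((1-β)/β)) := by ring
          _ = (Cv₁/γ)^((1-β)/β)*K^(1/β) := by rw [h4]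
      have hTT : T^(1-β)*T^(β-1) = 1 := by
        rw [← Real.rpow_add hT, show (1-β)+(β-1) = 0 by ring, Real.rpow_zero]
      have hcK : (0:ℝ) ≤ c*K := mul_nonneg hcpos.le hK
      have hT1 : (0:ℝ) ≤ T^(1-β) := Real.rpow_nonneg hT.le _
      have step1 : M₃ ≤ c*K*(1 + 2*T^(1-β)*(T^(β-1)+b^(β-1))) := by
        rw [hM₃def, hEdef, hM₂c]
        have inner : 1 + 2*T^(1-β)*τ^(β-1) ≤ 1 + 2*T^(1-β)*(T^(β-1)+b^(β-1)) := by
          have h30 := mul_le_mul_of_nonneg_left hτc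
            (by linarith : (0:ℝ) ≤ 2*T^(1-β))
          linarith
        exact mul_le_mul_of_nonneg_left inner hcK
      have step2 : c*K*(1 + 2*T^(1-β)*(T^(β-1)+b^(β-1)))
          = 3*c*K + 2*c*T^(1-β)*((Cv₁/γ)^((1-β)/β)*K^(1/β)) := by
        have expand : c*K*(1 + 2*T^(1-β)*(T^(β-1)+b^(β-1)))
            = c*K + 2*c*K*(T^(1-β)*T^(β-1)) + 2*c*T^(1-β)*(K*b^(β-1)) := by ring
        rw [expand, hTT, hKb]
        ring
      have hfinal : 3*c*K + 2*c*T^(1-β)*((Cv₁/γ)^((1-β)/β)*K^(1/β))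
          ≤ C*max K (K^(1/β)) := by
        have m1 : K ≤ max K (K^(1/β)) := le_max_left _ _
        have m2 : K^(1/β) ≤ max K (K^(1/β)) := le_max_right _ _
        have q1 : (0:ℝ) ≤ 3*c := by linarith
        have q2 : (0:ℝ) ≤ 2*c*T^(1-β)*(Cv₁/γ)^((1-β)/β) :=
          mul_nonneg (mul_nonneg (by linarith) hT1)
            (Real.rpow_nonneg (div_nonneg hCv₁.le hγ.le) _)
        rw [hCdef]
        linarith [mul_le_mul_of_nonneg_left m1 q1, mul_le_mul_of_nonneg_left m2 q2]
      calc M₃ ≤ c*K*(1 + 2*T^(1-β)*(T^(β-1)+b^(β-1))) := step1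
        _ = 3*c*K + 2*c*T^(1-β)*((Cv₁/γ)^((1-β)/β)*K^(1/β)) := step2
        _ ≤ C*max K (K^(1/β)) := hfinal
    -- conclude via the sup
    apply Real.sSup_le
    · rintro x ⟨u, v, h1, h2, h3, rfl⟩
      have h4 := hlong u v h1 h2 h3
      have h5 : (0:ℝ) < (v-u)^β := Real.rpow_pos_of_pos (by linarith) _
      rw [div_le_iff₀ h5]
      calc ‖Y v - Y u‖ ≤ M₃*(v-u)^β := h4
        _ ≤ (C*max K (K^(1/β)))*(v-u)^β :=
            mul_le_mul_of_nonneg_right hM₃C h5.le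
    · exact mul_nonneg hC.le hmax
end

section
/- Let $\{Y^n_t\}$ be the continuous version of an $s$-stage Runge–Kutta method with stage values $Y^n_{t,i}$, driven by a $\beta$-Hölder path $X$ with $\beta\in(1/2,1)$ and coefficients $V\in\mathcal{C}^1_b(\mathbb{R}^m;\mathbb{R}^{m\times d})$. Then for all $n$: $\sum_{i=1}^{s}\|Y^n_{\cdot,i}\|_\beta\le C\max\{\|X\|_\beta,\|X\|_\beta^{1/\beta}\}$ and $\|Y^n_\cdot\|_\beta\le C\max\{\|X\|_\beta,\|X\|_\beta^{1/\beta+1}\}$, where $C$ depends only on $\max\{|a_{ij}|,|b_i|\}$, $s$, $V$, $\beta$, $T$ and not on $n$. -/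
set_option maxHeartbeats 1600000 in
/-- **A priori Hölder bounds, uniform in `n`, for Runge–Kutta methods and their stage
values.** For the continuous version `Y^n` of an `S`-stage Runge–Kutta method with stage
values `Z = Y^n_{·,i}`, driven by a `β`-Hölder path `X` (`β ∈ (1/2,1)`) with
`V ∈ C¹_b(ℝ^m; ℝ^{m×d})`:
`∑_i ‖Y^n_{·,i}‖_β ≤ C max{‖X‖_β, ‖X‖_β^{1/β}}` and
`‖Y^n‖_β ≤ C max{‖X‖_β, ‖X‖_β^{1/β+1}}`, where `C` depends only on
`max{|a_{ij}|, |b_i|}`, `S`, `V`, `β`, `T`, not on `n`. -/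
theorem rungeKutta_apriori_holder_bounds
    (m d S : ℕ) (β T : ℝ) (hβ : β ∈ Set.Ioo (1/2 : ℝ) 1) (hT : 0 < T)
    (V : (Fin m → ℝ) → ((Fin d → ℝ) →L[ℝ] (Fin m → ℝ))) (Cv : ℝ)
    (hVdiff : Differentiable ℝ V)
    (hVb : ∀ y, ‖V y‖ ≤ Cv ∧ ‖fderiv ℝ V y‖ ≤ Cv) (cmax : ℝ) :
    ∃ C : ℝ, 0 < C ∧
      ∀ (a : Fin S → Fin S → ℝ) (b : Fin S → ℝ),
      (∀ i j, |a i j| ≤ cmax ∧ |b i| ≤ cmax) →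
      ∀ (n : ℕ), 0 < n →
      ∀ (X : ℝ → (Fin d → ℝ)) (Y : ℝ → (Fin m → ℝ)) (Z : ℝ → Fin S → (Fin m → ℝ))
        (y : Fin m → ℝ) (K : ℝ), 0 ≤ K →
      -- `X` is `β`-Hölder with constant `K`
      (∀ u v : ℝ, 0 ≤ u → u < v → v ≤ T → ‖X v - X u‖ ≤ K * (v - u) ^ β) →
      Y 0 = y → (∀ i, Z 0 i = y) →
      -- continuous version of the numerical solution:
      -- `Y^n_t = Y^n_{t_k} + ∑_i b_i V(Y^n_{t_{k+1},i})(X_t - X_{t_k})` for `t ∈ [t_k,t_{k+1}]`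
      (∀ k : ℕ, k < n → ∀ u : ℝ, (k : ℝ) * T / n ≤ u → u ≤ ((k : ℝ) + 1) * T / n →
        Y u = Y ((k : ℝ) * T / n) +
          ∑ i, b i • V (Z (((k : ℝ) + 1) * T / n) i) (X u - X ((k : ℝ) * T / n))) →
      -- continuous version of the stage values, `t ∈ (t_k, t_{k+1}]`, `k ≥ 1`:
      (∀ k : ℕ, 1 ≤ k → k < n → ∀ u : ℝ, (k : ℝ) * T / n < u → u ≤ ((k : ℝ) + 1) * T / n →
        ∀ i, Z u i = Y (u - T / n) +
          ∑ j, a i j • (V (Z ((k : ℝ) * T / n) j) (X ((k : ℝ) * T / n) - X (u - T / n)) +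
            V (Z (((k : ℝ) + 1) * T / n) j) (X u - X ((k : ℝ) * T / n)))) →
      -- stage values on the first cell `(0, t_1]`:
      (∀ u : ℝ, 0 < u → u ≤ T / n → ∀ i,
        Z u i = y + ∑ j, a i j • V (Z (T / n) j) (X u - X 0)) →
      ((∑ i, holderSemi (fun u => Z u i) 0 T β) ≤ C * max K (K ^ (1 / β)) ∧
        holderSemi Y 0 T β ≤ C * max K (K ^ (1 / β + 1))) := by
  classical
  obtain ⟨hβ1, hβ2⟩ := hβ
  have hβ0 : (0:ℝ) < β := by linarith
  have hβne : β ≠ 0 := ne_of_gt hβ0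
  have hCv : 0 ≤ Cv := le_trans (norm_nonneg _) (hVb 0).1
  have hVlip : ∀ x z, ‖V x - V z‖ ≤ Cv * ‖x - z‖ := fun x z =>
    Convex.norm_image_sub_le_of_norm_fderiv_le (fun w _ => hVdiff w) (fun w _ => (hVb w).2)
      convex_univ trivial trivial
  have hVap : ∀ x (w : Fin d → ℝ), ‖V x w‖ ≤ Cv * ‖w‖ := fun x w =>
    le_trans (ContinuousLinearMap.le_opNorm _ _)
      (mul_le_mul_of_nonneg_right (hVb x).1 (norm_nonneg _))
  have hVdap : ∀ x z (w : Fin d → ℝ), ‖V x w - V z w‖ ≤ (Cv * ‖x - z‖) * ‖w‖ := by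
    intro x z w
    have h1 : V x w - V z w = (V x - V z) w := by simp
    rw [h1]
    exact le_trans (ContinuousLinearMap.le_opNorm _ _)
      (mul_le_mul_of_nonneg_right (hVlip x z) (norm_nonneg _))
  set M : ℝ := max cmax 0 with hMdef
  have hM0 : (0:ℝ) ≤ M := le_max_right _ _
  set c₁ : ℝ := S * M * Cv + 1 with hc₁def
  have hc₁1 : (1:ℝ) ≤ c₁ := by
    have : (0:ℝ) ≤ (S:ℝ) * M * Cv := by positivity
    linarith
  have hc₁0 : (0:ℝ) < c₁ := by linarith
  have hSMC : (S:ℝ) * M * Cv ≤ c₁ := by rw [hc₁def]; linarith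
  set θ : ℝ := ((2:ℝ) ^ (2*β) - 2)/2 with hθdef
  have h2b : (2:ℝ) < 2 ^ (2*β) := by
    calc (2:ℝ) = 2 ^ (1:ℝ) := (Real.rpow_one 2).symm
    _ < 2 ^ (2*β) := Real.rpow_lt_rpow_of_exponent_lt one_lt_two (by linarith)
  have hθ0 : 0 < θ := by rw [hθdef]; linarith
  set B : ℝ := (3*c₁^2+1)/θ with hBdef
  have hB0 : 0 < B := by positivity
  have hθB : θ * B = 3*c₁^2+1 := by
    rw [hBdef]; field_simp
  set A : ℝ := B*θ/c₁ + c₁ with hAdef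
  have hA0 : 0 < A := by positivity
  have hhalfpow : (0:ℝ) < 1 - 2 ^ (-β) := by
    have : (2:ℝ)^(-β) < 1 := Real.rpow_lt_one_of_one_lt_of_neg one_lt_two (by linarith)
    linarith
  set A' : ℝ := A / (1 - 2 ^ (-β)) with hA'def
  have hA'0 : 0 < A' := by positivity
  have hAA' : A + A' * 2^(-β) = A' := by
    have h := hA'def
    have : A' * (1 - 2^(-β)) = A := by
      rw [hA'def, div_mul_cancel₀ _ (ne_of_gt hhalfpow)]
    nlinarith [this]
  set e1 : ℝ := (1-β)/β with he1def
  have he1 : 0 ≤ e1 := by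
    rw [he1def]; exact div_nonneg (by linarith) hβ0.le
  set cθ : ℝ := (c₁/θ) ^ e1 with hcθdef
  have hcθ0 : 0 ≤ cθ := Real.rpow_nonneg (by positivity) _
  set T1 : ℝ := T ^ (1-β) with hT1def
  have hT10 : 0 ≤ T1 := Real.rpow_nonneg hT.le _
  set CG : ℝ := A' + 2*A'*cθ*T1 + 2*c₁*cθ*T1 with hCGdef
  have hCG0 : 0 ≤ CG := by positivity
  have hS0 : (0:ℝ) ≤ (S:ℝ) := Nat.cast_nonneg S
  refine ⟨((S:ℝ)+1)*(CG+6*c₁)+1, by nlinarith, ?_⟩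
  intro a b hab n hn X Y Z y K hK hX hY0 hZ0 hYeq hZeq hZ1
  have hn0 : (0:ℝ) < n := by exact_mod_cast hn
  set τ : ℝ := T / n with hτdef
  have hτ0 : 0 < τ := div_pos hT hn0
  set t : ℕ → ℝ := fun k => k * τ with htdef
  have hcast : ∀ k : ℕ, (k:ℝ) * T / n = t k := by
    intro k; rw [htdef]; simp only []; rw [hτdef]; ring
  have hcast1 : ∀ k : ℕ, ((k:ℝ)+1) * T / n = t (k+1) := by
    intro k; rw [← hcast (k+1)]; push_cast; ring
  have ht0 : t 0 = 0 := by simp [htdef]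
  have htnn : ∀ k : ℕ, 0 ≤ t k := fun k => mul_nonneg (Nat.cast_nonneg k) hτ0.le
  have htsucc : ∀ k : ℕ, t (k+1) = t k + τ := by
    intro k; rw [htdef]; simp only []; push_cast; ring
  have htmono : ∀ {j k : ℕ}, j ≤ k → t j ≤ t k := by
    intro j k hjk
    exact mul_le_mul_of_nonneg_right (by exact_mod_cast hjk) hτ0.le
  have htdiff : ∀ j k : ℕ, j ≤ k → t k - t j = ((k - j : ℕ) : ℝ) * τ := by
    intro j k hjk
    rw [htdef]; simp only []
    rw [Nat.cast_sub hjk]; ring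
  have htnT : t n = T := by
    rw [htdef]; simp only []; rw [hτdef]; field_simp
  have htT : ∀ {k : ℕ}, k ≤ n → t k ≤ T := by
    intro k hk; rw [← htnT]; exact htmono hk
  have hX2 : ∀ u v : ℝ, 0 ≤ u → u ≤ v → v ≤ T → ‖X v - X u‖ ≤ K * (v-u)^β := by
    intro u v hu huv hv
    rcases eq_or_lt_of_le huv with rfl | hlt
    · simp [Real.zero_rpow hβne]
    · exact hX u v hu hlt hv
  have hsum : ∀ (c : Fin S → ℝ), (∀ j, |c j| ≤ M) → ∀ (w : Fin S → (Fin m → ℝ)) (bd : ℝ),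
      (∀ j, ‖w j‖ ≤ bd) → ‖∑ j, c j • w j‖ ≤ (S:ℝ) * M * bd := by
    intro c hc w bd hw
    refine le_trans (norm_sum_le _ _) ?_
    have h1 : ∀ j : Fin S, ‖c j • w j‖ ≤ M * bd := by
      intro j
      rw [norm_smul]
      exact mul_le_mul (hc j) (hw j) (norm_nonneg _) hM0
    refine le_trans (Finset.sum_le_sum (fun j _ => h1 j)) ?_
    rw [Finset.sum_const, Finset.card_univ, Fintype.card_fin, nsmul_eq_mul]
    rw [mul_assoc]
  have hbM : ∀ i, |b i| ≤ M := fun i => le_trans (hab i i).2 (le_max_left _ _)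
  have haM : ∀ i j, |a i j| ≤ M := fun i j => le_trans (hab i j).1 (le_max_left _ _)
  set F : ℕ → (Fin d → ℝ) →L[ℝ] (Fin m → ℝ) := fun k => ∑ i, b i • V (Z (t (k+1)) i)
    with hFdef
  have hFap : ∀ (k : ℕ) (w : Fin d → ℝ), F k w = ∑ i, b i • V (Z (t (k+1)) i) w := by
    intro k w
    rw [hFdef]
    simp [ContinuousLinearMap.sum_apply]
  have hFb : ∀ (k : ℕ) (w : Fin d → ℝ), ‖F k w‖ ≤ c₁ * ‖w‖ := by
    intro k w
    rw [hFap]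
    refine le_trans (hsum b hbM _ (Cv * ‖w‖) (fun i => hVap _ _)) ?_
    calc (S:ℝ)*M*(Cv*‖w‖) = ((S:ℝ)*M*Cv)*‖w‖ := by ring
    _ ≤ c₁*‖w‖ := mul_le_mul_of_nonneg_right hSMC (norm_nonneg w)
  have hYeq' : ∀ k : ℕ, k < n → ∀ u, t k ≤ u → u ≤ t (k+1) →
      Y u = Y (t k) + F k (X u - X (t k)) := by
    intro k hk u h1 h2
    have h3 := hYeq k hk u (by rw [hcast k]; exact h1) (by rw [hcast1 k]; exact h2)
    rw [hcast k, hcast1 k] at h3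
    rw [h3, hFap]
  have hcell : ∀ k : ℕ, k < n → ∀ u v, t k ≤ u → u ≤ v → v ≤ t (k+1) →
      Y v - Y u = F k (X v - X u) := by
    intro k hk u v h1 h2 h3
    rw [hYeq' k hk v (h1.trans h2) h3, hYeq' k hk u h1 (h2.trans h3)]
    have h4 : X v - X u = (X v - X (t k)) - (X u - X (t k)) := by abel
    rw [h4, map_sub (F k) (X v - X (t k)) (X u - X (t k))]
    abel
  have hKτ0 : 0 ≤ K * τ^β := mul_nonneg hK (Real.rpow_nonneg hτ0.le β)
  have hYcb : ∀ k : ℕ, k < n → ∀ u v, t k ≤ u → u ≤ v → v ≤ t (k+1) →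
      ‖Y v - Y u‖ ≤ c₁ * (K * (v-u)^β) := by
    intro k hk u v h1 h2 h3
    rw [hcell k hk u v h1 h2 h3]
    refine le_trans (hFb _ _) ?_
    have hx := hX2 u v (le_trans (htnn k) h1) h2 (le_trans h3 (htT hk))
    exact mul_le_mul_of_nonneg_left hx hc₁0.le
  have hF2 : ∀ k : ℕ, k < n → ∀ i, Z (t (k+1)) i =
      Y (t k) + ∑ j, a i j • V (Z (t (k+1)) j) (X (t (k+1)) - X (t k)) := by
    intro k hk i
    rcases Nat.eq_zero_or_pos k with rfl | hk1
    · have ht1 : t 1 = τ := by rw [htdef]; simp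
      have h5 := hZ1 (t 1) (by rw [ht1]; exact hτ0) (le_of_eq ht1) i
      rw [← ht1] at h5
      simpa [ht0, hY0] using h5
    · have hlt : (↑k * T / n : ℝ) < t (k+1) := by
        rw [hcast k, htsucc k]; linarith
    
      have h5 := hZeq k hk1 hk (t (k+1)) hlt (le_of_eq (hcast1 k).symm) i
      rw [hcast k, hcast1 k] at h5
      have h6 : t (k+1) - T/n = t k := by rw [htsucc k, hτdef]; ring
      rw [h6] at h5
      rw [h5]
      simp
  have hZgb : ∀ k : ℕ, k < n → ∀ i, ‖Z (t (k+1)) i - Y (t k)‖ ≤ c₁ * (K * τ^β) := by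
    intro k hk i
    rw [hF2 k hk i, add_sub_cancel_left]
    have hXk : ‖X (t (k+1)) - X (t k)‖ ≤ K * τ^β := by
      have h7 := hX2 (t k) (t (k+1)) (htnn k) (by rw [htsucc]; linarith) (htT hk)
      rwa [show t (k+1) - t k = τ by rw [htsucc]; ring] at h7
    refine le_trans (hsum (a i) (haM i) _ (Cv * (K * τ^β)) ?_) ?_
    · intro j
      exact le_trans (hVap _ _) (mul_le_mul_of_nonneg_left hXk hCv)
    · calc (S:ℝ)*M*(Cv*(K*τ^β)) = ((S:ℝ)*M*Cv)*(K*τ^β) := by ring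
      _ ≤ c₁*(K*τ^β) := mul_le_mul_of_nonneg_right hSMC hKτ0
  have hFd : ∀ k l : ℕ, k < n → l < n → ∀ w : Fin d → ℝ,
      ‖F l w - F k w‖ ≤ (c₁ * (‖Y (t l) - Y (t k)‖ + 2*(c₁*(K*τ^β)))) * ‖w‖ := by
    intro k l hk hl w
    rw [hFap, hFap]
    have hD0 : 0 ≤ ‖Y (t l) - Y (t k)‖ + 2*(c₁*(K*τ^β)) := by
      have := norm_nonneg (Y (t l) - Y (t k))
      nlinarith [hc₁0, hKτ0]
    have h8 : ∑ i, b i • V (Z (t (l+1)) i) w - ∑ i, b i • V (Z (t (k+1)) i) w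
        = ∑ i, b i • (V (Z (t (l+1)) i) w - V (Z (t (k+1)) i) w) := by
      rw [← Finset.sum_sub_distrib]
      simp [smul_sub]
    rw [h8]
    refine le_trans (hsum b hbM _
      ((Cv * (‖Y (t l) - Y (t k)‖ + 2*(c₁*(K*τ^β)))) * ‖w‖) ?_) ?_
    · intro i
      refine le_trans (hVdap _ _ _) ?_
      have h9 : ‖Z (t (l+1)) i - Z (t (k+1)) i‖ ≤ ‖Y (t l) - Y (t k)‖ + 2*(c₁*(K*τ^β)) := by
        have h10 : Z (t (l+1)) i - Z (t (k+1)) i =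
            (Y (t l) - Y (t k)) + ((Z (t (l+1)) i - Y (t l)) - (Z (t (k+1)) i - Y (t k))) := by
          abel
        rw [h10]
        refine le_trans (norm_add_le _ _) ?_
        have h11 := le_trans (norm_sub_le _ _) (add_le_add (hZgb l hl i) (hZgb k hk i))
        linarith
      have h12 : Cv * ‖Z (t (l+1)) i - Z (t (k+1)) i‖
          ≤ Cv * (‖Y (t l) - Y (t k)‖ + 2*(c₁*(K*τ^β))) := mul_le_mul_of_nonneg_left h9 hCv
      exact mul_le_mul_of_nonneg_right h12 (norm_nonneg w)
    · calc (S:ℝ)*M*(Cv * (‖Y (t l) - Y (t k)‖ + 2*(c₁*(K*τ^β))) * ‖w‖)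
          = ((S:ℝ)*M*Cv)*((‖Y (t l) - Y (t k)‖ + 2*(c₁*(K*τ^β))) * ‖w‖) := by ring
      _ ≤ c₁*((‖Y (t l) - Y (t k)‖ + 2*(c₁*(K*τ^β))) * ‖w‖) :=
          mul_le_mul_of_nonneg_right hSMC (mul_nonneg hD0 (norm_nonneg w))
      _ = (c₁ * (‖Y (t l) - Y (t k)‖ + 2*(c₁*(K*τ^β)))) * ‖w‖ := by ring
  have hXg : ∀ j N : ℕ, j + N ≤ n → ‖X (t (j+N)) - X (t j)‖ ≤ K * (((N:ℕ):ℝ)*τ)^β := by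
    intro j N hjN
    have h13 := hX2 (t j) (t (j+N)) (htnn j) (htmono (Nat.le_add_right _ _)) (htT hjN)
    rwa [htdiff j (j+N) (Nat.le_add_right _ _), Nat.add_sub_cancel_left] at h13
  have hQ : ∀ mm : ℕ, ∀ k : ℕ, k + 2^mm ≤ n → c₁ * (K * ((2:ℝ)^mm * τ)^β) ≤ θ →
      ‖Y (t (k + 2^mm)) - Y (t k) - F k (X (t (k + 2^mm)) - X (t k))‖
        ≤ B * (K * ((2:ℝ)^mm*τ)^β)^2 := by
    intro mm
    induction mm with
    | zero =>
      intro k hk hc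
      have hf1 : Y (t (k+1)) = Y (t k) + F k (X (t (k+1)) - X (t k)) :=
        hYeq' k (by simpa using hk) (t (k+1)) (htmono (Nat.le_succ k)) le_rfl
      have hz : Y (t (k + 2^0)) - Y (t k) - F k (X (t (k + 2^0)) - X (t k)) = 0 := by
        simp only [pow_zero]
        rw [hf1]; abel
      rw [hz, norm_zero]
      exact mul_nonneg hB0.le (sq_nonneg _)
    | succ mm ih =>
      intro k hk hc
      have e2 : (2:ℕ)^(mm+1) = 2^mm + 2^mm := by rw [pow_succ]; ring
      have hkn2 : (k + 2^mm) + 2^mm ≤ n := by rw [add_assoc, ← e2]; exact hk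
      have h2pos : 0 < 2^mm := Nat.two_pow_pos mm
      have hkn1 : k + 2^mm ≤ n := by
        refine le_trans ?_ hkn2
        exact Nat.le_add_right _ _
      have hidx : k + 2^(mm+1) = (k + 2^mm) + 2^mm := by rw [e2, ← add_assoc]
      have hklt : k < n := lt_of_lt_of_le (Nat.lt_add_of_pos_right h2pos) hkn1
      have hk2lt : k + 2^mm < n := lt_of_lt_of_le (Nat.lt_add_of_pos_right h2pos) hkn2
      have hLτnn : (0:ℝ) ≤ (2:ℝ)^mm * τ := by positivity
      have hrp : ((2:ℝ)^mm*τ)^β ≤ ((2:ℝ)^(mm+1)*τ)^β := by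
        refine Real.rpow_le_rpow hLτnn ?_ hβ0.le
        have h21 : (2:ℝ)^mm ≤ (2:ℝ)^(mm+1) := pow_le_pow_right₀ (by norm_num) (Nat.le_succ mm)
        exact mul_le_mul_of_nonneg_right h21 hτ0.le
      have hcm' : c₁ * (K * ((2:ℝ)^mm*τ)^β) ≤ θ := by
        have h22 := mul_le_mul_of_nonneg_left (mul_le_mul_of_nonneg_left hrp hK) hc₁0.le
        linarith [hc]
      obtain ⟨γ, hγdef⟩ : ∃ γ : ℝ, γ = K * ((2:ℝ)^mm*τ)^β := ⟨_, rfl⟩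
      have hγ0 : 0 ≤ γ := by rw [hγdef]; exact mul_nonneg hK (Real.rpow_nonneg hLτnn β)
      have hcm : c₁ * γ ≤ θ := by rw [hγdef]; exact hcm'
      have hIH1 := ih k hkn1 hcm'
      have hIH2 := ih (k + 2^mm) hkn2 hcm'
      rw [← hγdef] at hIH1 hIH2
      have hXa : ‖X (t (k + 2^mm)) - X (t k)‖ ≤ γ := by
        have h20 := hXg k (2^mm) hkn1
        rw [show (((2:ℕ)^mm : ℕ):ℝ) = (2:ℝ)^mm by push_cast; ring] at h20
        rw [hγdef]; exact h20
      have hXb : ‖X (t ((k + 2^mm) + 2^mm)) - X (t (k + 2^mm))‖ ≤ γ := by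
        have h20 := hXg (k + 2^mm) (2^mm) hkn2
        rw [show (((2:ℕ)^mm : ℕ):ℝ) = (2:ℝ)^mm by push_cast; ring] at h20
        rw [hγdef]; exact h20
      have hτγ : K * τ^β ≤ γ := by
        rw [hγdef]
        refine mul_le_mul_of_nonneg_left ?_ hK
        refine Real.rpow_le_rpow hτ0.le ?_ hβ0.le
        have h24 : (1:ℝ) ≤ (2:ℝ)^mm := by
          calc (1:ℝ) = (2:ℝ)^(0:ℕ) := by norm_num
          _ ≤ (2:ℝ)^mm := pow_le_pow_right₀ (by norm_num) (Nat.zero_le mm)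
        calc τ = 1*τ := (one_mul τ).symm
        _ ≤ (2:ℝ)^mm*τ := mul_le_mul_of_nonneg_right h24 hτ0.le
      have hYd : ‖Y (t (k + 2^mm)) - Y (t k)‖ ≤ B*γ^2 + c₁*γ := by
        have hsplit2 : Y (t (k+2^mm)) - Y (t k) =
            (Y (t (k+2^mm)) - Y (t k) - F k (X (t (k+2^mm)) - X (t k)))
              + F k (X (t (k+2^mm)) - X (t k)) := by abel
        rw [hsplit2]
        refine le_trans (norm_add_le _ _) (add_le_add hIH1 ?_)
        refine le_trans (hFb _ _) ?_
        exact mul_le_mul_of_nonneg_left hXa hc₁0.le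
      have hin : ‖Y (t (k+2^mm)) - Y (t k)‖ + 2*(c₁*(K*τ^β)) ≤ (B*γ^2 + c₁*γ) + 2*(c₁*γ) := by
        have h23 := mul_le_mul_of_nonneg_left hτγ hc₁0.le
        linarith
      have hin2nn : (0:ℝ) ≤ (B*γ^2 + c₁*γ) + 2*(c₁*γ) := by
        have j1 := mul_nonneg hB0.le (sq_nonneg γ)
        have j2 := mul_nonneg hc₁0.le hγ0
        linarith
      have h31 : ‖F (k+2^mm) (X (t ((k + 2^mm) + 2^mm)) - X (t (k + 2^mm)))
          - F k (X (t ((k + 2^mm) + 2^mm)) - X (t (k + 2^mm)))‖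
            ≤ (c₁*((B*γ^2 + c₁*γ) + 2*(c₁*γ)))*γ := by
        refine le_trans (hFd k (k+2^mm) hklt hk2lt _) ?_
        exact mul_le_mul (mul_le_mul_of_nonneg_left hin hc₁0.le) hXb (norm_nonneg _)
          (mul_nonneg hc₁0.le hin2nn)
      rw [hidx]
      have hsplit3 : Y (t ((k+2^mm)+2^mm)) - Y (t k)
            - F k (X (t ((k+2^mm)+2^mm)) - X (t k)) =
          (Y (t (k+2^mm)) - Y (t k) - F k (X (t (k+2^mm)) - X (t k)))
          + (Y (t ((k+2^mm)+2^mm)) - Y (t (k+2^mm))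
              - F (k+2^mm) (X (t ((k+2^mm)+2^mm)) - X (t (k+2^mm))))
          + (F (k+2^mm) (X (t ((k+2^mm)+2^mm)) - X (t (k+2^mm)))
              - F k (X (t ((k+2^mm)+2^mm)) - X (t (k+2^mm)))) := by
        have hm2 : F k (X (t ((k+2^mm)+2^mm)) - X (t k)) =
            F k (X (t ((k+2^mm)+2^mm)) - X (t (k+2^mm))) + F k (X (t (k+2^mm)) - X (t k)) := by
          rw [← map_add]; congr 1; abel
        rw [hm2]; abel
      rw [hsplit3]
      refine le_trans (norm_add_le _ _) ?_
      refine le_trans (add_le_add (norm_add_le _ _) le_rfl) ?_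
      refine le_trans (add_le_add (add_le_add hIH1 hIH2) h31) ?_
      have h2e : ((2:ℝ))^(mm+1)*τ = 2*((2:ℝ)^mm*τ) := by ring
      have hmr : ((2:ℝ)*((2:ℝ)^mm*τ))^β = (2:ℝ)^β * ((2:ℝ)^mm*τ)^β :=
        Real.mul_rpow (by norm_num) hLτnn
      have h2βsq : ((2:ℝ)^β)^(2:ℕ) = (2:ℝ)^(2*β) := by
        rw [← Real.rpow_natCast ((2:ℝ)^β) 2, ← Real.rpow_mul (by norm_num : (0:ℝ) ≤ 2)]
        norm_num [mul_comm]
      have h2θ : (2:ℝ)+2*θ = (2:ℝ)^(2*β) := by rw [hθdef]; ring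
      have htarget : B*(K*((2:ℝ)^(mm+1)*τ)^β)^2 = (2+2*θ)*(B*γ^2) := by
        calc B*(K*((2:ℝ)^(mm+1)*τ)^β)^2 = B*(K*((2:ℝ)^β*((2:ℝ)^mm*τ)^β))^2 := by
              rw [h2e, hmr]
        _ = ((2:ℝ)^β)^(2:ℕ)*(B*(K*((2:ℝ)^mm*τ)^β)^2) := by ring
        _ = (2+2*θ)*(B*γ^2) := by rw [h2βsq, ← h2θ, hγdef]
      rw [htarget]
      have k1 : c₁*γ*(B*γ^2) ≤ θ*(B*γ^2) :=
        mul_le_mul_of_nonneg_right hcm (mul_nonneg hB0.le (sq_nonneg γ))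
      have k2 : (3*c₁^2)*γ^2 ≤ (θ*B)*γ^2 :=
        mul_le_mul_of_nonneg_right (by linarith [hθB]) (sq_nonneg γ)
      have k3 : (c₁*((B*γ^2+c₁*γ)+2*(c₁*γ)))*γ = c₁*γ*(B*γ^2) + (3*c₁^2)*γ^2 := by ring
      rw [k3]
      linarith [k1, k2]
  have hdyadY : ∀ mm k : ℕ, k + 2^mm ≤ n → c₁ * (K * ((2:ℝ)^mm * τ)^β) ≤ θ →
      ‖Y (t (k + 2^mm)) - Y (t k)‖ ≤ A * (K * ((2:ℝ)^mm*τ)^β) := by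
    intro mm k hk hc
    obtain ⟨γ, hγdef⟩ : ∃ γ : ℝ, γ = K * ((2:ℝ)^mm*τ)^β := ⟨_, rfl⟩
    have hγ0 : 0 ≤ γ := by
      rw [hγdef]; exact mul_nonneg hK (Real.rpow_nonneg (by positivity) β)
    have hQ1 := hQ mm k hk hc
    rw [← hγdef] at hQ1 ⊢
    have hcγ : c₁*γ ≤ θ := by rw [hγdef]; exact hc
    have hXa : ‖X (t (k + 2^mm)) - X (t k)‖ ≤ γ := by
      have h20 := hXg k (2^mm) hk
      rw [show (((2:ℕ)^mm : ℕ):ℝ) = (2:ℝ)^mm by push_cast; ring] at h20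
      rw [hγdef]; exact h20
    have hsplit2 : Y (t (k+2^mm)) - Y (t k) =
        (Y (t (k+2^mm)) - Y (t k) - F k (X (t (k+2^mm)) - X (t k)))
          + F k (X (t (k+2^mm)) - X (t k)) := by abel
    rw [hsplit2]
    refine le_trans (norm_add_le _ _) ?_
    have h41 : ‖F k (X (t (k+2^mm)) - X (t k))‖ ≤ c₁*γ :=
      le_trans (hFb _ _) (mul_le_mul_of_nonneg_left hXa hc₁0.le)
    have hγθ : γ ≤ θ/c₁ := by rw [le_div_iff₀ hc₁0, mul_comm]; exact hcγ
    have h42 : B*γ^2 ≤ (B*θ/c₁)*γ := by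
      calc B*γ^2 = (B*γ)*γ := by ring
      _ ≤ (B*(θ/c₁))*γ := mul_le_mul_of_nonneg_right (mul_le_mul_of_nonneg_left hγθ hB0.le) hγ0
      _ = (B*θ/c₁)*γ := by ring
    refine le_trans (add_le_add hQ1 h41) ?_
    rw [hAdef]
    linarith [h42]
  have hGbin : ∀ N k : ℕ, k + N ≤ n → c₁ * (K * ((N:ℝ)*τ)^β) ≤ θ →
      ‖Y (t (k+N)) - Y (t k)‖ ≤ A' * (K * ((N:ℝ)*τ)^β) := by
    intro N
    induction N using Nat.strong_induction_on with
    | _ N ihN =>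
    intro k hkN hcN
    rcases Nat.eq_zero_or_pos N with rfl | hN1
    · simp [Real.zero_rpow hβne]
    · have hNne : N ≠ 0 := hN1.ne'
      obtain ⟨P, hP⟩ : ∃ P, P = 2^(Nat.log2 N) := ⟨_, rfl⟩
      have hlog1 : P ≤ N := hP ▸ Nat.log2_self_le hNne
      have hlog2 : N < 2*P := by
        have h61 := Nat.lt_log2_self (n := N)
        rw [pow_succ'] at h61
        rw [hP]; exact h61
      have hP1 : 1 ≤ P := by rw [hP]; exact Nat.one_le_two_pow
      have hPcast : ((P:ℕ):ℝ) = (2:ℝ)^(Nat.log2 N) := by rw [hP]; push_cast; ring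
      obtain ⟨r, hrdef⟩ : ∃ r, r = N - P := ⟨_, rfl⟩
      have hrN : r < N := by omega
      have hrNle : (r:ℝ) ≤ (N:ℝ) := by exact_mod_cast (by omega : r ≤ N)
      have hPNle : ((P:ℕ):ℝ) ≤ (N:ℝ) := by exact_mod_cast hlog1
      have hcm : c₁*(K*(((P:ℕ):ℝ)*τ)^β) ≤ θ := by
        refine le_trans ?_ hcN
        have h62 := Real.rpow_le_rpow (by positivity)
          (mul_le_mul_of_nonneg_right hPNle hτ0.le) hβ0.le
        exact mul_le_mul_of_nonneg_left (mul_le_mul_of_nonneg_left h62 hK) hc₁0.le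
      have hcr : c₁*(K*((r:ℝ)*τ)^β) ≤ θ := by
        refine le_trans ?_ hcN
        have h62 := Real.rpow_le_rpow (by positivity)
          (mul_le_mul_of_nonneg_right hrNle hτ0.le) hβ0.le
        exact mul_le_mul_of_nonneg_left (mul_le_mul_of_nonneg_left h62 hK) hc₁0.le
      have hcm' : c₁*(K*((2:ℝ)^(Nat.log2 N)*τ)^β) ≤ θ := by rw [← hPcast]; exact hcm
      have hd := hdyadY (Nat.log2 N) k (by rw [← hP]; omega) hcm'
      rw [← hP, ← hPcast] at hd
      have hIH := ihN r hrN (k+P) (by omega) hcr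
      rw [show k + P + r = k + N from by omega] at hIH
      have hsplit : Y (t (k+N)) - Y (t k) =
          (Y (t (k+N)) - Y (t (k+P))) + (Y (t (k+P)) - Y (t k)) := by abel
      have hr2 : (r:ℝ) ≤ (N:ℝ)/2 := by
        have h2r : 2*r ≤ N := by omega
        have : (2:ℝ)*(r:ℝ) ≤ (N:ℝ) := by exact_mod_cast h2r
        linarith
      have hx1 : ((r:ℝ)*τ)^β ≤ ((N:ℝ)*τ)^β * 2^(-β) := by
        have hrle : (r:ℝ)*τ ≤ (((N:ℝ)*τ)/2) := by
          rw [show ((N:ℝ)*τ)/2 = ((N:ℝ)/2)*τ from by ring]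
          exact mul_le_mul_of_nonneg_right hr2 hτ0.le
        calc ((r:ℝ)*τ)^β ≤ (((N:ℝ)*τ)/2)^β :=
              Real.rpow_le_rpow (by positivity) hrle hβ0.le
        _ = ((N:ℝ)*τ)^β / 2^β := Real.div_rpow (by positivity) (by norm_num) β
        _ = ((N:ℝ)*τ)^β * 2^(-β) := by
              rw [Real.rpow_neg (by norm_num : (0:ℝ) ≤ 2)]; ring
      have hx2 : (((P:ℕ):ℝ)*τ)^β ≤ ((N:ℝ)*τ)^β :=
        Real.rpow_le_rpow (by positivity) (mul_le_mul_of_nonneg_right hPNle hτ0.le) hβ0.le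
      calc ‖Y (t (k+N)) - Y (t k)‖
          ≤ ‖Y (t (k+N)) - Y (t (k+P))‖ + ‖Y (t (k+P)) - Y (t k)‖ := by
            rw [hsplit]; exact norm_add_le _ _
      _ ≤ A'*(K*((r:ℝ)*τ)^β) + A*(K*(((P:ℕ):ℝ)*τ)^β) := add_le_add hIH hd
      _ ≤ A'*(K*(((N:ℝ)*τ)^β*2^(-β))) + A*(K*((N:ℝ)*τ)^β) := by
            refine add_le_add ?_ ?_
            · exact mul_le_mul_of_nonneg_left (mul_le_mul_of_nonneg_left hx1 hK) hA'0.le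
            · exact mul_le_mul_of_nonneg_left (mul_le_mul_of_nonneg_left hx2 hK) hA0.le
      _ = (A + A'*2^(-β))*(K*((N:ℝ)*τ)^β) := by ring
      _ = A'*(K*((N:ℝ)*τ)^β) := by rw [hAA']
  have hchain : ∀ (Δ : ℝ) (p : ℕ), 0 < p → 0 ≤ Δ →
      (∀ j N' : ℕ, j + N' ≤ n → N' ≤ p → ‖Y (t (j+N')) - Y (t j)‖ ≤ Δ) →
      ∀ N k : ℕ, k + N ≤ n → ‖Y (t (k+N)) - Y (t k)‖ ≤ ((N:ℝ)/(p:ℝ) + 1) * Δ := by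
    intro Δ p hp hΔ hblock N
    induction N using Nat.strong_induction_on with
    | _ N ihN =>
    intro k hkN
    have hp0 : (0:ℝ) < (p:ℝ) := by exact_mod_cast hp
    by_cases hNp : N ≤ p
    · refine le_trans (hblock k N hkN hNp) ?_
      have h51 : (0:ℝ) ≤ (N:ℝ)/(p:ℝ) := by positivity
      have h52 := mul_nonneg h51 hΔ
      linarith only [h52]
    · push_neg at hNp
      have hsplit : Y (t (k+N)) - Y (t k) =
          (Y (t (k+N)) - Y (t (k+p))) + (Y (t (k+p)) - Y (t k)) := by abel
      have hIH := ihN (N-p) (by omega) (k+p) (by omega)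
      rw [show k + p + (N-p) = k + N from by omega] at hIH
      have hb2 := hblock k p (by omega) le_rfl
      have hcast2 : ((N-p:ℕ):ℝ) = (N:ℝ) - (p:ℝ) := by
        rw [Nat.cast_sub hNp.le]
      calc ‖Y (t (k+N)) - Y (t k)‖
          ≤ ‖Y (t (k+N)) - Y (t (k+p))‖ + ‖Y (t (k+p)) - Y (t k)‖ := by
            rw [hsplit]; exact norm_add_le _ _
      _ ≤ (((N-p:ℕ):ℝ)/(p:ℝ)+1)*Δ + Δ := add_le_add hIH hb2
      _ = ((((N:ℝ)-(p:ℝ))/(p:ℝ)+1)+1)*Δ := by rw [hcast2]; ring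
      _ = ((N:ℝ)/(p:ℝ)+1)*Δ := by
            have : ((N:ℝ)-(p:ℝ))/(p:ℝ)+1 = (N:ℝ)/(p:ℝ) := by field_simp; ring
            rw [this]
  have hkeyexp : 0 < K → ∀ x : ℝ, 0 < x → θ < c₁ * (K * x^β) → x^(β-1) ≤ cθ * K^e1 := by
    intro hK0 x hx hbig
    have hcK : 0 < c₁*K := mul_pos hc₁0 hK0
    have h1 : θ/(c₁*K) < x^β := by
      rw [div_lt_iff₀ hcK]
      nlinarith only [hbig]
    have h0cK : 0 < θ/(c₁*K) := div_pos hθ0 hcK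
    have h2 : x^(β-1) = (x^β)^((β-1)/β) := by
      rw [← Real.rpow_mul hx.le]
      congr 1
      field_simp
    have h3 : (x^β)^((β-1)/β) ≤ (θ/(c₁*K))^((β-1)/β) := by
      refine Real.rpow_le_rpow_of_nonpos h0cK h1.le ?_
      exact div_nonpos_of_nonpos_of_nonneg (by linarith) hβ0.le
    have h4 : (θ/(c₁*K))^((β-1)/β) = (c₁*K/θ)^e1 := by
      have hq : θ/(c₁*K) = (c₁*K/θ)⁻¹ := by rw [inv_div]
      have hpos : (0:ℝ) ≤ c₁*K/θ := le_of_lt (div_pos hcK hθ0)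
      rw [hq, Real.inv_rpow hpos, ← Real.rpow_neg hpos]
      congr 1
      rw [he1def]; ring
    have h5 : (c₁*K/θ)^e1 = cθ*K^e1 := by
      rw [hcθdef, ← Real.mul_rpow (div_nonneg hc₁0.le hθ0.le) hK0.le]
      congr 1
      ring
    calc x^(β-1) = (x^β)^((β-1)/β) := h2
    _ ≤ (θ/(c₁*K))^((β-1)/β) := h3
    _ = cθ*K^e1 := by rw [h4, h5]
  obtain ⟨mx, hmxdef⟩ : ∃ mx : ℝ, mx = max K (K^((1:ℝ)/β)) := ⟨_, rfl⟩
  have hmxK : K ≤ mx := hmxdef ▸ le_max_left _ _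
  have hmxK2 : K^((1:ℝ)/β) ≤ mx := hmxdef ▸ le_max_right _ _
  have hmx0 : 0 ≤ mx := le_trans hK hmxK
  have hGG : ∀ N k : ℕ, k + N ≤ n → ‖Y (t (k+N)) - Y (t k)‖ ≤ CG * mx * ((N:ℝ)*τ)^β := by
    intro N k hkN
    have hNτnn : (0:ℝ) ≤ (N:ℝ)*τ := by positivity
    have hxb : (0:ℝ) ≤ ((N:ℝ)*τ)^β := Real.rpow_nonneg hNτnn β
    by_cases hcN : c₁ * (K * ((N:ℝ)*τ)^β) ≤ θ
    · refine le_trans (hGbin N k hkN hcN) ?_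
      have h71 : A' * (K * ((N:ℝ)*τ)^β) ≤ A' * (mx * ((N:ℝ)*τ)^β) :=
        mul_le_mul_of_nonneg_left (mul_le_mul_of_nonneg_right hmxK hxb) hA'0.le
      refine le_trans h71 ?_
      have hCGA : A' ≤ CG := by
        rw [hCGdef]
        have w1 : (0:ℝ) ≤ 2*A'*cθ*T1 :=
          mul_nonneg (mul_nonneg (mul_nonneg (by norm_num : (0:ℝ) ≤ 2) hA'0.le) hcθ0) hT10
        have w2 : (0:ℝ) ≤ 2*c₁*cθ*T1 :=
          mul_nonneg (mul_nonneg (mul_nonneg (by norm_num : (0:ℝ) ≤ 2) hc₁0.le) hcθ0) hT10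
        linarith only [w1, w2]
      calc A'*(mx*((N:ℝ)*τ)^β) = A'*mx*((N:ℝ)*τ)^β := by ring
      _ ≤ CG*mx*((N:ℝ)*τ)^β :=
        mul_le_mul_of_nonneg_right (mul_le_mul_of_nonneg_right hCGA hmx0) hxb
    · push_neg at hcN
      have hK0 : 0 < K := by
        rcases eq_or_lt_of_le hK with h | h
        · exfalso
          rw [← h] at hcN
          simp at hcN
          linarith only [hθ0, hcN]
        · exact h
      have hN0 : N ≠ 0 := by
        rintro rfl
        simp [Real.zero_rpow hβne] at hcN
        linarith only [hθ0, hcN]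
      have hNR0 : (0:ℝ) < (N:ℝ) := by exact_mod_cast Nat.pos_of_ne_zero hN0
      have hNτ0 : 0 < (N:ℝ)*τ := mul_pos hNR0 hτ0
      have hNτT : (N:ℝ)*τ ≤ T := by
        have h72 : t N ≤ T := htT (by omega)
        exact h72
      have hT1N : ((N:ℝ)*τ)^(1-β) ≤ T1 := by
        rw [hT1def]; exact Real.rpow_le_rpow hNτ0.le hNτT (by linarith)
      have hsplitN : (N:ℝ)*τ = ((N:ℝ)*τ)^β * ((N:ℝ)*τ)^(1-β) := by
        rw [← Real.rpow_add hNτ0, show β+(1-β) = (1:ℝ) from by ring, Real.rpow_one]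
      have hNτb : (N:ℝ)*τ ≤ ((N:ℝ)*τ)^β * T1 := by
        calc (N:ℝ)*τ = ((N:ℝ)*τ)^β * ((N:ℝ)*τ)^(1-β) := hsplitN
        _ ≤ ((N:ℝ)*τ)^β * T1 := mul_le_mul_of_nonneg_left hT1N hxb
      have hKe : K^((1:ℝ)/β) = K * K^e1 := by
        have h73 : (1:ℝ)/β = 1 + e1 := by rw [he1def]; field_simp; ring
        rw [h73, Real.rpow_add hK0, Real.rpow_one]
      by_cases hc1 : c₁ * (K * τ^β) ≤ θ
      · -- blocks of maximal admissible size p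
        have hN1 : 1 ≤ N := Nat.pos_of_ne_zero hN0
        have hP1 : c₁ * (K * (((1:ℕ):ℝ)*τ)^β) ≤ θ := by
          simp only [Nat.cast_one, one_mul]; exact hc1
        obtain ⟨p, hpdef⟩ : ∃ p, p = Nat.findGreatest (fun j => c₁ * (K * ((j:ℝ)*τ)^β) ≤ θ) N :=
          ⟨_, rfl⟩
        have hp1 : 1 ≤ p := hpdef ▸ Nat.le_findGreatest hN1 hP1
        have hpN : p ≤ N := hpdef ▸ Nat.findGreatest_le N
        have hPp : c₁ * (K * ((p:ℝ)*τ)^β) ≤ θ := by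
          rw [hpdef]
          exact Nat.findGreatest_spec (P := fun j => c₁ * (K * ((j:ℝ)*τ)^β) ≤ θ) hN1 hP1
        have hpneN : p ≠ N := by
          intro hEq
          rw [hEq] at hPp
          exact absurd hPp (not_le.mpr hcN)
        have hPnot : ¬ (c₁ * (K * (((p+1:ℕ):ℝ)*τ)^β) ≤ θ) :=
          Nat.findGreatest_is_greatest (P := fun j => c₁ * (K * ((j:ℝ)*τ)^β) ≤ θ)
            (by rw [← hpdef]; omega) (by omega)
        push_neg at hPnot
        have hp0R : (0:ℝ) < (p:ℝ) := by exact_mod_cast (by omega : 0 < p)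
        have hp1R : (1:ℝ) ≤ (p:ℝ) := by exact_mod_cast hp1
        have hpτ0 : (0:ℝ) < (p:ℝ)*τ := mul_pos hp0R hτ0
        have hblock : ∀ j N' : ℕ, j + N' ≤ n → N' ≤ p →
            ‖Y (t (j+N')) - Y (t j)‖ ≤ A' * (K * ((p:ℝ)*τ)^β) := by
          intro j N' h1 h2
          have hmono3 : ((N':ℝ)*τ)^β ≤ ((p:ℝ)*τ)^β :=
            Real.rpow_le_rpow (by positivity)
              (mul_le_mul_of_nonneg_right (by exact_mod_cast h2) hτ0.le) hβ0.le
          have hcond : c₁ * (K * ((N':ℝ)*τ)^β) ≤ θ := by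
            refine le_trans ?_ hPp
            exact mul_le_mul_of_nonneg_left (mul_le_mul_of_nonneg_left hmono3 hK) hc₁0.le
          refine le_trans (hGbin N' j h1 hcond) ?_
          exact mul_le_mul_of_nonneg_left (mul_le_mul_of_nonneg_left hmono3 hK) hA'0.le
        have hpτβnn : (0:ℝ) ≤ ((p:ℝ)*τ)^β := Real.rpow_nonneg hpτ0.le β
        have hΔnn : 0 ≤ A' * (K * ((p:ℝ)*τ)^β) :=
          mul_nonneg hA'0.le (mul_nonneg hK hpτβnn)
        have hch := hchain (A' * (K * ((p:ℝ)*τ)^β)) p (by omega) hΔnn hblock N k hkN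
        refine le_trans hch ?_
        have hkey : (((p:ℝ)+1)*τ)^(β-1) ≤ cθ * K^e1 := by
          refine hkeyexp hK0 (((p:ℝ)+1)*τ) (mul_pos (by positivity) hτ0) ?_
          have := hPnot
          rw [show (((p+1:ℕ):ℝ)) = (p:ℝ)+1 from by push_cast; ring] at this
          exact this
        have hrw1 : ((p:ℝ)*τ)^(β-1) * ((p:ℝ)*τ) = ((p:ℝ)*τ)^β := by
          rw [Real.rpow_sub_one (ne_of_gt hpτ0)]
          field_simp
        have hge : ((p:ℝ)+1)*τ/2 ≤ (p:ℝ)*τ := by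
          have h76 : ((p:ℝ)+1)/2 ≤ (p:ℝ) := by linarith only [hp1R]
          calc ((p:ℝ)+1)*τ/2 = (((p:ℝ)+1)/2)*τ := by ring
          _ ≤ (p:ℝ)*τ := mul_le_mul_of_nonneg_right h76 hτ0.le
        have hp1τnn : (0:ℝ) ≤ ((p:ℝ)+1)*τ := mul_nonneg (by positivity) hτ0.le
        have m1 : ((p:ℝ)*τ)^(β-1) ≤ (((p:ℝ)+1)*τ/2)^(β-1) :=
          Real.rpow_le_rpow_of_nonpos (div_pos (mul_pos (by positivity) hτ0) two_pos) hge
            (by linarith only [hβ2])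
        have m2 : (((p:ℝ)+1)*τ/2)^(β-1) = (((p:ℝ)+1)*τ)^(β-1) / 2^(β-1) :=
          Real.div_rpow hp1τnn (by norm_num) _
        have m3 : (((p:ℝ)+1)*τ)^(β-1)/2^(β-1) ≤ 2*((((p:ℝ)+1)*τ)^(β-1)) := by
          rw [div_eq_mul_inv, ← Real.rpow_neg (by norm_num : (0:ℝ) ≤ 2)]
          have h74 : (2:ℝ)^(-(β-1)) ≤ 2 := by
            calc (2:ℝ)^(-(β-1)) ≤ 2^(1:ℝ) :=
                  Real.rpow_le_rpow_of_exponent_le one_le_two (by linarith)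
            _ = 2 := Real.rpow_one 2
          have hnn : 0 ≤ (((p:ℝ)+1)*τ)^(β-1) := Real.rpow_nonneg hp1τnn _
          calc (((p:ℝ)+1)*τ)^(β-1) * (2:ℝ)^(-(β-1))
              ≤ (((p:ℝ)+1)*τ)^(β-1) * 2 := mul_le_mul_of_nonneg_left h74 hnn
          _ = 2*((((p:ℝ)+1)*τ)^(β-1)) := by ring
        have hpb : ((p:ℝ)*τ)^(β-1) ≤ 2*(cθ*K^e1) := by
          calc ((p:ℝ)*τ)^(β-1) ≤ (((p:ℝ)+1)*τ/2)^(β-1) := m1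
          _ = (((p:ℝ)+1)*τ)^(β-1) / 2^(β-1) := m2
          _ ≤ 2*((((p:ℝ)+1)*τ)^(β-1)) := m3
          _ ≤ 2*(cθ*K^e1) := by
                refine mul_le_mul_of_nonneg_left hkey (by norm_num)
        have t1 : ((N:ℝ)/(p:ℝ))*(A'*(K*((p:ℝ)*τ)^β))
            = (A'*K*((N:ℝ)*τ))*((p:ℝ)*τ)^(β-1) := by
          rw [← hrw1]
          field_simp
        have hAKN : (0:ℝ) ≤ A'*K*((N:ℝ)*τ) :=
          mul_nonneg (mul_nonneg hA'0.le hK) hNτ0.le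
        have h2Acθ : (0:ℝ) ≤ 2*A'*cθ :=
          mul_nonneg (mul_nonneg (by norm_num) hA'0.le) hcθ0
        calc ((N:ℝ)/(p:ℝ) + 1) * (A'*(K*((p:ℝ)*τ)^β))
            = ((N:ℝ)/(p:ℝ))*(A'*(K*((p:ℝ)*τ)^β)) + A'*(K*((p:ℝ)*τ)^β) := by ring
        _ ≤ (A'*K*((N:ℝ)*τ))*(2*(cθ*K^e1)) + A'*(mx*((N:ℝ)*τ)^β) := by
            refine add_le_add ?_ ?_
            · rw [t1]
              exact mul_le_mul_of_nonneg_left hpb hAKN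
            · refine mul_le_mul_of_nonneg_left ?_ hA'0.le
              have hmonoP : ((p:ℝ)*τ)^β ≤ ((N:ℝ)*τ)^β :=
                Real.rpow_le_rpow hpτ0.le
                  (mul_le_mul_of_nonneg_right (by exact_mod_cast hpN) hτ0.le) hβ0.le
              exact mul_le_mul hmxK hmonoP hpτβnn hmx0
        _ = (2*A'*cθ) * (((N:ℝ)*τ) * (K*K^e1)) + A'*(mx*((N:ℝ)*τ)^β) := by ring
        _ = (2*A'*cθ) * (((N:ℝ)*τ) * K^((1:ℝ)/β)) + A'*(mx*((N:ℝ)*τ)^β) := by rw [hKe]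
        _ ≤ (2*A'*cθ) * ((((N:ℝ)*τ)^β*T1) * mx) + A'*(mx*((N:ℝ)*τ)^β) := by
            refine add_le_add (mul_le_mul_of_nonneg_left ?_ h2Acθ) le_rfl
            exact mul_le_mul hNτb hmxK2 (Real.rpow_nonneg hK _) (mul_nonneg hxb hT10)
        _ = (2*A'*cθ*T1 + A')*(mx*((N:ℝ)*τ)^β) := by ring
        _ ≤ CG*(mx*((N:ℝ)*τ)^β) := by
            refine mul_le_mul_of_nonneg_right ?_ (mul_nonneg hmx0 hxb)
            rw [hCGdef]
            have w2 : (0:ℝ) ≤ 2*c₁*cθ*T1 :=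
              mul_nonneg (mul_nonneg (mul_nonneg (by norm_num : (0:ℝ) ≤ 2) hc₁0.le) hcθ0) hT10
            linarith only [w2]
        _ = CG*mx*((N:ℝ)*τ)^β := by ring
      · push_neg at hc1
        have hblock : ∀ j N' : ℕ, j + N' ≤ n → N' ≤ 1 →
            ‖Y (t (j+N')) - Y (t j)‖ ≤ c₁*(K*τ^β) := by
          intro j N' h1 h2
          interval_cases N'
          · simp only [Nat.add_zero, sub_self, norm_zero]
            exact mul_nonneg hc₁0.le hKτ0
          · have h75 := hYcb j (by omega) (t j) (t (j+1)) le_rfl (htmono (Nat.le_succ j)) le_rfl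
            rwa [show t (j+1) - t j = τ from by rw [htsucc]; ring] at h75
        have hch := hchain (c₁*(K*τ^β)) 1 one_pos (mul_nonneg hc₁0.le hKτ0) hblock N k hkN
        refine le_trans hch ?_
        have hkey : τ^(β-1) ≤ cθ * K^e1 := hkeyexp hK0 τ hτ0 hc1
        have hN1R : (1:ℝ) ≤ (N:ℝ) := by exact_mod_cast Nat.pos_of_ne_zero hN0
        have hτrw : τ^(β-1)*τ = τ^β := by
          rw [Real.rpow_sub_one (ne_of_gt hτ0)]
          field_simp
        have h2c : (0:ℝ) ≤ 2*c₁ := by linarith only [hc₁0]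
        have h2ccθ : (0:ℝ) ≤ 2*c₁*cθ := mul_nonneg h2c hcθ0
        have hKτβnn : (0:ℝ) ≤ K*τ^β := hKτ0
        calc ((N:ℝ)/((1:ℕ):ℝ) + 1) * (c₁*(K*τ^β))
            = ((N:ℝ)+1) * (c₁*(K*τ^β)) := by norm_num
        _ ≤ (2*(N:ℝ)) * (c₁*(K*τ^β)) := by
            refine mul_le_mul_of_nonneg_right (by linarith only [hN1R]) (mul_nonneg hc₁0.le hKτ0)
        _ = (2*c₁) * (((N:ℝ)*τ) * (K*τ^(β-1))) := by
            rw [← hτrw]; ring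
        _ ≤ (2*c₁) * (((N:ℝ)*τ) * (K*(cθ*K^e1))) := by
            refine mul_le_mul_of_nonneg_left ?_ h2c
            refine mul_le_mul_of_nonneg_left ?_ hNτ0.le
            exact mul_le_mul_of_nonneg_left hkey hK0.le
        _ = (2*c₁*cθ) * (((N:ℝ)*τ) * (K*K^e1)) := by ring
        _ = (2*c₁*cθ) * (((N:ℝ)*τ) * K^((1:ℝ)/β)) := by rw [hKe]
        _ ≤ (2*c₁*cθ) * ((((N:ℝ)*τ)^β*T1) * mx) := by
            refine mul_le_mul_of_nonneg_left ?_ h2ccθ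
            exact mul_le_mul hNτb hmxK2 (Real.rpow_nonneg hK _) (mul_nonneg hxb hT10)
        _ = (2*c₁*cθ*T1)*(mx*((N:ℝ)*τ)^β) := by ring
        _ ≤ CG*(mx*((N:ℝ)*τ)^β) := by
            refine mul_le_mul_of_nonneg_right ?_ (mul_nonneg hmx0 hxb)
            rw [hCGdef]
            have w1 : (0:ℝ) ≤ 2*A'*cθ*T1 :=
              mul_nonneg (mul_nonneg (mul_nonneg (by norm_num : (0:ℝ) ≤ 2) hA'0.le) hcθ0) hT10
            linarith only [w1, hA'0]
        _ = CG*mx*((N:ℝ)*τ)^β := by ring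
  have hcellY : ∀ u : ℝ, 0 ≤ u → u ≤ T → ∃ k : ℕ, k < n ∧ t k ≤ u ∧ u ≤ t (k+1) := by
    intro u hu huT
    by_cases hf : Nat.floor (u/τ) ≤ n-1
    · refine ⟨Nat.floor (u/τ), by omega, ?_, ?_⟩
      · have h81 : ((Nat.floor (u/τ)):ℝ) ≤ u/τ := Nat.floor_le (by positivity)
        show ((Nat.floor (u/τ)):ℝ)*τ ≤ u
        calc ((Nat.floor (u/τ)):ℝ)*τ ≤ (u/τ)*τ := mul_le_mul_of_nonneg_right h81 hτ0.le
        _ = u := div_mul_cancel₀ u (ne_of_gt hτ0)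
      · have h82 : u/τ < Nat.floor (u/τ) + 1 := Nat.lt_floor_add_one _
        show u ≤ ((Nat.floor (u/τ) + 1 : ℕ):ℝ)*τ
        push_cast
        calc u = (u/τ)*τ := (div_mul_cancel₀ u (ne_of_gt hτ0)).symm
        _ ≤ (((Nat.floor (u/τ)):ℝ)+1)*τ := mul_le_mul_of_nonneg_right h82.le hτ0.le
    · push_neg at hf
      refine ⟨n-1, by omega, ?_, ?_⟩
      · have h83 : ((n-1:ℕ):ℝ) ≤ u/τ :=
          le_trans (by exact_mod_cast (by omega : (n-1:ℕ) ≤ Nat.floor (u/τ)))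
            (Nat.floor_le (by positivity))
        show ((n-1:ℕ):ℝ)*τ ≤ u
        calc ((n-1:ℕ):ℝ)*τ ≤ (u/τ)*τ := mul_le_mul_of_nonneg_right h83 hτ0.le
        _ = u := div_mul_cancel₀ u (ne_of_gt hτ0)
      · rw [show (n-1)+1 = n from by omega, htnT]
        exact huT
  obtain ⟨HY, hHYdef⟩ : ∃ HY : ℝ, HY = CG*mx + 2*(c₁*K) := ⟨_, rfl⟩
  have hHY0 : 0 ≤ HY := by
    rw [hHYdef]
    have w1 := mul_nonneg hCG0 hmx0
    have w2 := mul_nonneg hc₁0.le hK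
    linarith only [w1, w2]
  have hO1 : ∀ u v : ℝ, 0 ≤ u → u ≤ v → v ≤ T → ‖Y v - Y u‖ ≤ HY * (v-u)^β := by
    intro u v hu huv hvT
    obtain ⟨k, hk, hku1, hku2⟩ := hcellY u hu (le_trans huv hvT)
    obtain ⟨l, hl, hlv1, hlv2⟩ := hcellY v (le_trans hu huv) hvT
    have hvunn : (0:ℝ) ≤ v - u := by linarith only [huv]
    have hrpnn : (0:ℝ) ≤ (v-u)^β := Real.rpow_nonneg hvunn β
    by_cases hcase : v ≤ t (k+1)
    · have h84 := hYcb k hk u v hku1 huv hcase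
      refine le_trans h84 ?_
      rw [hHYdef, show c₁*(K*(v-u)^β) = (c₁*K)*(v-u)^β from by ring]
      refine mul_le_mul_of_nonneg_right ?_ hrpnn
      have w1 := mul_nonneg hCG0 hmx0
      have w2 := mul_nonneg hc₁0.le hK
      linarith only [w1, w2]
    · push_neg at hcase
      have hkl : k+1 ≤ l := by
        by_contra hcon
        push_neg at hcon
        have h85 : t (l+1) ≤ t (k+1) := htmono (by omega)
        linarith only [hlv2, hcase, h85]
      have htlk : t (k+1) ≤ t l := htmono hkl
      have hp1 : ‖Y (t (k+1)) - Y u‖ ≤ c₁*(K*(t (k+1) - u)^β) :=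
        hYcb k hk u (t (k+1)) hku1 hku2 le_rfl
      have hp3 : ‖Y v - Y (t l)‖ ≤ c₁*(K*(v - t l)^β) :=
        hYcb l hl (t l) v le_rfl hlv1 hlv2
      have hp2 := hGG (l - (k+1)) (k+1) (by omega)
      rw [show (k+1) + (l - (k+1)) = l from by omega] at hp2
      have hg1 : t (k+1) - u ≤ v - u := by linarith only [htlk, hlv1]
      have hg1' : 0 ≤ t (k+1) - u := by linarith only [hku2]
      have hg3 : v - t l ≤ v - u := by linarith only [hku2, htlk]
      have hg3' : 0 ≤ v - t l := by linarith only [hlv1]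
      have hg2 : ((l - (k+1):ℕ):ℝ)*τ ≤ v - u := by
        rw [← htdiff (k+1) l hkl]
        linarith only [hlv1, hku2]
      have hg2' : 0 ≤ ((l - (k+1):ℕ):ℝ)*τ := by positivity
      have hr1 : (t (k+1) - u)^β ≤ (v-u)^β := Real.rpow_le_rpow hg1' hg1 hβ0.le
      have hr3 : (v - t l)^β ≤ (v-u)^β := Real.rpow_le_rpow hg3' hg3 hβ0.le
      have hr2 : (((l - (k+1):ℕ):ℝ)*τ)^β ≤ (v-u)^β := Real.rpow_le_rpow hg2' hg2 hβ0.le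
      have hsplit : Y v - Y u =
          (Y v - Y (t l)) + (Y (t l) - Y (t (k+1))) + (Y (t (k+1)) - Y u) := by abel
      calc ‖Y v - Y u‖
          ≤ ‖Y v - Y (t l)‖ + ‖Y (t l) - Y (t (k+1))‖ + ‖Y (t (k+1)) - Y u‖ := by
            rw [hsplit]
            exact le_trans (norm_add_le _ _) (add_le_add (norm_add_le _ _) le_rfl)
      _ ≤ c₁*(K*(v-u)^β) + CG*mx*(v-u)^β + c₁*(K*(v-u)^β) := by
            refine add_le_add (add_le_add ?_ ?_) ?_
            · exact le_trans hp3
                (mul_le_mul_of_nonneg_left (mul_le_mul_of_nonneg_left hr3 hK) hc₁0.le)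
            · exact le_trans hp2 (mul_le_mul_of_nonneg_left hr2 (mul_nonneg hCG0 hmx0))
            · exact le_trans hp1
                (mul_le_mul_of_nonneg_left (mul_le_mul_of_nonneg_left hr1 hK) hc₁0.le)
      _ = HY*(v-u)^β := by rw [hHYdef]; ring
  have ht1τ : t 1 = τ := by rw [htsucc 0, ht0]; ring
  have hU : ∀ k : ℕ, k < n → ∀ u : ℝ, t k < u → u ≤ t (k+1) → ∀ i,
      Z u i = Y (max (u - τ) 0) + ∑ j, a i j • (V (Z (t k) j) (X (t k) - X (max (u - τ) 0))
        + V (Z (t (k+1)) j) (X u - X (t k))) := by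
    intro k hk u hu1 hu2 i
    rcases Nat.eq_zero_or_pos k with rfl | hk1
    · have hu0 : 0 < u := by rw [ht0] at hu1; exact hu1
      have huτ : u ≤ τ := by
        rw [show t (0+1) = τ from by rw [htsucc 0, ht0]; ring] at hu2
        exact hu2
      have hm : max (u - τ) 0 = 0 := max_eq_right (by linarith only [huτ])
      have h91 := hZ1 u hu0 huτ i
      rw [hm, ht0, hY0, h91]
      congr 1
      refine Finset.sum_congr rfl fun j _ => ?_
      have h92 : t (0+1) = τ := by rw [htsucc 0, ht0]; ring
      rw [h92, sub_self, map_zero, zero_add]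
    · have hτtk : τ ≤ t k := by rw [← ht1τ]; exact htmono hk1
      have hm : max (u - τ) 0 = u - τ := max_eq_left (by linarith only [hu1, hτtk])
      have h94 := hZeq k hk1 hk u (by rw [hcast k]; exact hu1) (by rw [hcast1 k]; exact hu2) i
      rw [hcast k, hcast1 k] at h94
      rw [hm]
      exact h94
  have hcellZ : ∀ w : ℝ, 0 < w → w ≤ T → ∃ k : ℕ, k < n ∧ t k < w ∧ w ≤ t (k+1) := by
    intro w hw hwT
    obtain ⟨c, hc⟩ : ∃ c, c = Nat.ceil (w/τ) := ⟨_, rfl⟩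
    have hc1 : 1 ≤ c := by
      rw [hc]
      exact Nat.one_le_ceil_iff.mpr (div_pos hw hτ0)
    have hcn : c ≤ n := by
      rw [hc]
      refine Nat.ceil_le.mpr ?_
      rw [div_le_iff₀ hτ0]
      exact le_trans hwT (le_of_eq htnT.symm)
    refine ⟨c-1, by omega, ?_, ?_⟩
    · have h95 : ((c:ℝ)) - 1 < w/τ := by
        rw [hc]
        have h96 := Nat.ceil_lt_add_one (le_of_lt (div_pos hw hτ0))
        linarith only [h96]
      have hcast3 : ((c-1:ℕ):ℝ) = (c:ℝ) - 1 := by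
        rw [Nat.cast_sub hc1]; norm_num
      show ((c-1:ℕ):ℝ)*τ < w
      rw [hcast3]
      calc ((c:ℝ)-1)*τ < (w/τ)*τ := mul_lt_mul_of_pos_right h95 hτ0
      _ = w := div_mul_cancel₀ w (ne_of_gt hτ0)
    · rw [show c-1+1 = c from by omega]
      show w ≤ (c:ℝ)*τ
      have h97 := Nat.le_ceil (w/τ)
      rw [← hc] at h97
      calc w = (w/τ)*τ := (div_mul_cancel₀ w (ne_of_gt hτ0)).symm
      _ ≤ (c:ℝ)*τ := mul_le_mul_of_nonneg_right h97 hτ0.le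
  obtain ⟨ZC, hZCdef⟩ : ∃ ZC : ℝ, ZC = HY + 4*(c₁*K) := ⟨_, rfl⟩
  have hc₁K : (0:ℝ) ≤ c₁*K := mul_nonneg hc₁0.le hK
  have hZC0 : 0 ≤ ZC := by rw [hZCdef]; linarith only [hHY0, hc₁K]
  have hZB : ∀ (i : Fin S) (u v : ℝ), 0 ≤ u → u < v → v ≤ T →
      ‖Z v i - Z u i‖ ≤ ZC * (v-u)^β := by
    intro i u v hu huv hvT
    have hv0 : 0 < v := lt_of_le_of_lt hu huv
    obtain ⟨l, hl, hlv1, hlv2⟩ := hcellZ v hv0 hvT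
    have hvu0 : (0:ℝ) ≤ v - u := by linarith only [huv]
    have hrpnn : (0:ℝ) ≤ (v-u)^β := Real.rpow_nonneg hvu0 β
    have hKrp : (0:ℝ) ≤ K*(v-u)^β := mul_nonneg hK hrpnn
    have hXgap : ∀ x z : ℝ, 0 ≤ x → x ≤ z → z ≤ T → z - x ≤ v - u →
        ‖X z - X x‖ ≤ K*(v-u)^β := by
      intro x z h1 h2 h3 h4
      refine le_trans (hX2 x z h1 h2 h3) ?_
      exact mul_le_mul_of_nonneg_left
        (Real.rpow_le_rpow (by linarith only [h2]) h4 hβ0.le) hK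
    have hσv1 : 0 ≤ max (v-τ) 0 := le_max_right _ _
    have hσvT : max (v-τ) 0 ≤ T := max_le (by linarith only [hvT, hτ0]) hT.le
    have hσvtl : max (v-τ) 0 ≤ t l := max_le (by linarith only [hlv2, htsucc l]) (htnn l)
    have hzv := hU l hl v hlv1 hlv2 i
    rcases eq_or_lt_of_le hu with hu0 | hu0
    · -- u = 0
      have hZu : Z u i = y := by rw [← hu0]; exact hZ0 i
      have hdiffA : Z v i - Z u i = (Y (max (v-τ) 0) - Y 0) +
          ∑ j, a i j • (V (Z (t l) j) (X (t l) - X (max (v-τ) 0))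
            + V (Z (t (l+1)) j) (X v - X (t l))) := by
        rw [hzv, hZu, hY0]
        abel
      rw [hdiffA]
      have hσvv : max (v-τ) 0 ≤ v - u := by
        rw [← hu0, sub_zero]
        exact max_le (by linarith only [hτ0]) hv0.le
      have hYp : ‖Y (max (v-τ) 0) - Y 0‖ ≤ HY*(v-u)^β := by
        refine le_trans (hO1 0 (max (v-τ) 0) le_rfl hσv1 hσvT) ?_
        refine mul_le_mul_of_nonneg_left ?_ hHY0
        rw [sub_zero]
        exact Real.rpow_le_rpow hσv1 hσvv hβ0.le
      have hgapA : t l - max (v-τ) 0 ≤ v - u := by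
        rcases Nat.eq_zero_or_pos l with rfl | hl1
        · rw [ht0]; linarith only [hσv1, hvu0]
        · have hτtl : τ ≤ t l := by rw [← ht1τ]; exact htmono hl1
          have h98 : v - τ ≤ max (v-τ) 0 := le_max_left _ _
          rw [← hu0, sub_zero]
          linarith only [h98, hτtl, hlv1]
      have hgapB : v - t l ≤ v - u := by
        rw [← hu0, sub_zero]; linarith only [htnn l]
      have hsb : ∀ j : Fin S, ‖V (Z (t l) j) (X (t l) - X (max (v-τ) 0))
          + V (Z (t (l+1)) j) (X v - X (t l))‖ ≤ Cv*(2*(K*(v-u)^β)) := by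
        intro j
        refine le_trans (norm_add_le _ _) ?_
        have w1 := le_trans (hVap (Z (t l) j) _) (mul_le_mul_of_nonneg_left
          (hXgap (max (v-τ) 0) (t l) hσv1 hσvtl (htT hl.le) hgapA) hCv)
        have w2 := le_trans (hVap (Z (t (l+1)) j) _) (mul_le_mul_of_nonneg_left
          (hXgap (t l) v (htnn l) hlv1.le hvT hgapB) hCv)
        linarith only [w1, w2]
      refine le_trans (norm_add_le _ _) ?_
      refine le_trans (add_le_add hYp (hsum (a i) (haM i) _ _ hsb)) ?_
      have hc2 : (S:ℝ)*M*(Cv*(2*(K*(v-u)^β))) ≤ c₁*(2*(K*(v-u)^β)) := by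
        have h107 := mul_le_mul_of_nonneg_right hSMC
          (show (0:ℝ) ≤ 2*(K*(v-u)^β) by linarith only [hKrp])
        calc (S:ℝ)*M*(Cv*(2*(K*(v-u)^β))) = ((S:ℝ)*M*Cv)*(2*(K*(v-u)^β)) := by ring
        _ ≤ c₁*(2*(K*(v-u)^β)) := h107
      rw [hZCdef]
      nlinarith only [hc2, hKrp, hc₁0, hrpnn, hHY0, hK, hc₁K,
        mul_nonneg hc₁K hrpnn]
    · -- 0 < u
      obtain ⟨k, hk, hku1, hku2⟩ := hcellZ u hu0 (by linarith only [huv, hvT])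
      have hkl : k ≤ l := by
        by_contra hcon
        push_neg at hcon
        have h99 : t (l+1) ≤ t k := htmono (by omega)
        linarith only [hlv2, hku1, huv, h99]
      have hzu := hU k hk u hku1 hku2 i
      have hsum2 : ∀ (P Q : Fin S → Fin m → ℝ),
          ∑ j, a i j • (P j - Q j) = (∑ j, a i j • P j) - (∑ j, a i j • Q j) := by
        intro P Q
        calc ∑ j, a i j • (P j - Q j) = ∑ j, (a i j • P j - a i j • Q j) :=
              Finset.sum_congr rfl fun j _ => smul_sub _ _ _
        _ = _ := Finset.sum_sub_distrib _ _
      have hdiff : Z v i - Z u i = (Y (max (v-τ) 0) - Y (max (u-τ) 0)) +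
          ∑ j, a i j • ((V (Z (t l) j) (X (t l) - X (max (v-τ) 0))
              + V (Z (t (l+1)) j) (X v - X (t l)))
            - (V (Z (t k) j) (X (t k) - X (max (u-τ) 0))
              + V (Z (t (k+1)) j) (X u - X (t k)))) := by
        rw [hzv, hzu, hsum2]
        abel
      have hσu1 : 0 ≤ max (u-τ) 0 := le_max_right _ _
      have hσmono : max (u-τ) 0 ≤ max (v-τ) 0 := max_le_max (by linarith only [huv]) le_rfl
      have hσlip : max (v-τ) 0 - max (u-τ) 0 ≤ v - u := by
        rcases le_or_gt (u-τ) 0 with h | h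
        · rw [max_eq_right h]
          have h102 : max (v-τ) 0 ≤ v - u :=
            max_le (by linarith only [h]) (by linarith only [huv])
          linarith only [h102]
        · rw [max_eq_left h.le, max_eq_left (by linarith only [h, huv] : (0:ℝ) ≤ v - τ)]
          linarith only []
      have hYpart : ‖Y (max (v-τ) 0) - Y (max (u-τ) 0)‖ ≤ HY*(v-u)^β := by
        refine le_trans (hO1 _ _ hσu1 hσmono hσvT) ?_
        refine mul_le_mul_of_nonneg_left ?_ hHY0
        exact Real.rpow_le_rpow (by linarith only [hσmono]) hσlip hβ0.le
      have hσutk : max (u-τ) 0 ≤ t k := max_le (by linarith only [hku2, htsucc k]) (htnn k)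
      have hk0case : u - τ ≤ 0 → t k = 0 := by
        intro h
        have h100 : u ≤ τ := by linarith only [h]
        rcases Nat.eq_zero_or_pos k with rfl | hk1
        · exact ht0
        · exfalso
          have h103 : τ ≤ t k := by rw [← ht1τ]; exact htmono hk1
          linarith only [h103, hku1, h100]
      have hgtk : ∀ w : ℝ, t (k+1) ≤ w → t k - max (u-τ) 0 ≤ w - u := by
        intro w hw
        rcases le_or_gt (u-τ) 0 with h | h
        · rw [max_eq_right h, hk0case h]
          have := htnn (k+1)
          linarith only [hku2, hw, hku1, hk0case h]
        · rw [max_eq_left h.le]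
          have := htsucc k
          linarith only [this, hw, hku2]
      have hDb : ∀ j : Fin S, ‖(V (Z (t l) j) (X (t l) - X (max (v-τ) 0))
            + V (Z (t (l+1)) j) (X v - X (t l)))
          - (V (Z (t k) j) (X (t k) - X (max (u-τ) 0))
            + V (Z (t (k+1)) j) (X u - X (t k)))‖ ≤ Cv*(4*(K*(v-u)^β)) := by
        intro j
        have hCvK : (0:ℝ) ≤ Cv*(K*(v-u)^β) := mul_nonneg hCv hKrp
        rcases (by omega : l = k ∨ l = k+1 ∨ k+2 ≤ l) with hEq | hEq | hge2
        · subst hEq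
          have hXgap1 : ‖X (max (u-τ) 0) - X (max (v-τ) 0)‖ ≤ K*(v-u)^β := by
            rw [norm_sub_rev]
            exact hXgap _ _ hσu1 hσmono hσvT hσlip
          have hXgap2 : ‖X v - X u‖ ≤ K*(v-u)^β := hXgap u v hu0.le huv.le hvT le_rfl
          have hEq2 : (V (Z (t l) j) (X (t l) - X (max (v-τ) 0))
              + V (Z (t (l+1)) j) (X v - X (t l)))
            - (V (Z (t l) j) (X (t l) - X (max (u-τ) 0)) + V (Z (t (l+1)) j) (X u - X (t l)))
            = V (Z (t l) j) (X (max (u-τ) 0) - X (max (v-τ) 0))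
              + V (Z (t (l+1)) j) (X v - X u) := by
            simp only [map_add, map_sub]
            abel
          rw [hEq2]
          refine le_trans (norm_add_le _ _) ?_
          have w1 := le_trans (hVap (Z (t l) j) _) (mul_le_mul_of_nonneg_left hXgap1 hCv)
          have w2 := le_trans (hVap (Z (t (l+1)) j) _) (mul_le_mul_of_nonneg_left hXgap2 hCv)
          linarith only [w1, w2, hCvK]
        · subst hEq
          have hτt1k : τ ≤ t (k+1) := by rw [← ht1τ]; exact htmono (by omega)
          have hσveq : max (v-τ) 0 = v - τ :=
            max_eq_left (by linarith only [hlv1, hτt1k])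
          have hEq2 : (V (Z (t (k+1)) j) (X (t (k+1)) - X (max (v-τ) 0))
              + V (Z (t (k+1+1)) j) (X v - X (t (k+1))))
            - (V (Z (t k) j) (X (t k) - X (max (u-τ) 0))
              + V (Z (t (k+1)) j) (X u - X (t k)))
            = V (Z (t (k+1)) j) ((X (t (k+1)) - X u) + (X (t k) - X (max (v-τ) 0)))
              + V (Z (t (k+1+1)) j) (X v - X (t (k+1)))
              - V (Z (t k) j) (X (t k) - X (max (u-τ) 0)) := by
            simp only [map_add, map_sub]
            abel
          rw [hEq2]
          have g1 : ‖X (t (k+1)) - X u‖ ≤ K*(v-u)^β :=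
            hXgap u (t (k+1)) hu0.le hku2 (htT hl.le) (by linarith only [hlv1])
          have g2 : ‖X (t k) - X (max (v-τ) 0)‖ ≤ K*(v-u)^β := by
            rw [norm_sub_rev]
            refine hXgap (t k) (max (v-τ) 0) (htnn k) ?_ hσvT ?_
            · rw [hσveq]
              linarith only [htsucc k, hlv1]
            · rw [hσveq]
              linarith only [htsucc k, hku2]
          have g3 : ‖X v - X (t (k+1))‖ ≤ K*(v-u)^β :=
            hXgap (t (k+1)) v (htnn _) hlv1.le hvT (by linarith only [hku2])
          have g4 : ‖X (t k) - X (max (u-τ) 0)‖ ≤ K*(v-u)^β :=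
            hXgap _ _ hσu1 hσutk (htT hk.le) (hgtk v hlv1.le)
          have w1 : ‖V (Z (t (k+1)) j) ((X (t (k+1)) - X u) + (X (t k) - X (max (v-τ) 0)))‖
              ≤ Cv*(2*(K*(v-u)^β)) := by
            refine le_trans (hVap _ _) ?_
            have h104 := le_trans (norm_add_le _ _) (add_le_add g1 g2)
            have h105 := mul_le_mul_of_nonneg_left h104 hCv
            linarith only [h105]
          have w2 := le_trans (hVap (Z (t (k+1+1)) j) _) (mul_le_mul_of_nonneg_left g3 hCv)
          have w3 := le_trans (hVap (Z (t k) j) _) (mul_le_mul_of_nonneg_left g4 hCv)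
          refine le_trans (norm_sub_le _ _) ?_
          refine le_trans (add_le_add (norm_add_le _ _) le_rfl) ?_
          linarith only [w1, w2, w3]
        · have hτvu : τ ≤ v - u := by
            have h101 := htmono (show k+1+1 ≤ l by omega)
            have h106 := htsucc (k+1)
            linarith only [h101, h106, hku2, hlv1]
          have hτt1l : τ ≤ t l := by rw [← ht1τ]; exact htmono (by omega)
          have hσveq : max (v-τ) 0 = v - τ :=
            max_eq_left (by linarith only [hlv1, hτt1l])
          have g1 : ‖X (t l) - X (max (v-τ) 0)‖ ≤ K*(v-u)^β := by
            refine hXgap _ _ hσv1 hσvtl (htT hl.le) ?_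
            rw [hσveq]
            linarith only [hlv1, hτvu]
          have g2 : ‖X v - X (t l)‖ ≤ K*(v-u)^β := by
            refine hXgap _ _ (htnn l) hlv1.le hvT ?_
            linarith only [htsucc l, hlv2, hτvu]
          have g3 : ‖X (t k) - X (max (u-τ) 0)‖ ≤ K*(v-u)^β := by
            refine hXgap _ _ hσu1 hσutk (htT hk.le) ?_
            refine le_trans (hgtk (t (k+1)) le_rfl) ?_
            linarith only [htsucc k, hku1, hτvu]
          have g4 : ‖X u - X (t k)‖ ≤ K*(v-u)^β := by
            refine hXgap _ _ (htnn k) hku1.le (by linarith only [huv, hvT]) ?_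
            linarith only [htsucc k, hku2, hτvu]
          have w1 := le_trans (hVap (Z (t l) j) _) (mul_le_mul_of_nonneg_left g1 hCv)
          have w2 := le_trans (hVap (Z (t (l+1)) j) _) (mul_le_mul_of_nonneg_left g2 hCv)
          have w3 := le_trans (hVap (Z (t k) j) _) (mul_le_mul_of_nonneg_left g3 hCv)
          have w4 := le_trans (hVap (Z (t (k+1)) j) _) (mul_le_mul_of_nonneg_left g4 hCv)
          refine le_trans (norm_sub_le _ _) ?_
          refine le_trans (add_le_add (norm_add_le _ _) (norm_add_le _ _)) ?_
          linarith only [w1, w2, w3, w4]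
      rw [hdiff]
      refine le_trans (norm_add_le _ _) ?_
      refine le_trans (add_le_add hYpart (hsum (a i) (haM i) _ _ hDb)) ?_
      have hc2 : (S:ℝ)*M*(Cv*(4*(K*(v-u)^β))) ≤ c₁*(4*(K*(v-u)^β)) := by
        have h107 := mul_le_mul_of_nonneg_right hSMC
          (show (0:ℝ) ≤ 4*(K*(v-u)^β) by linarith only [hKrp])
        calc (S:ℝ)*M*(Cv*(4*(K*(v-u)^β))) = ((S:ℝ)*M*Cv)*(4*(K*(v-u)^β)) := by ring
        _ ≤ c₁*(4*(K*(v-u)^β)) := h107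
      rw [hZCdef]
      nlinarith only [hc2, hrpnn, mul_nonneg hc₁K hrpnn]
  have h1β : (1:ℝ) ≤ 1/β := by
    rw [le_div_iff₀ hβ0]; linarith
  have hmax12 : mx ≤ max K (K^((1:ℝ)/β + 1)) := by
    rw [hmxdef]
    refine max_le (le_max_left _ _) ?_
    rcases le_or_gt K 1 with h | h
    · rcases eq_or_lt_of_le hK with h0 | h0
      · rw [← h0, Real.zero_rpow (ne_of_gt (div_pos one_pos hβ0))]
        exact le_max_left _ _
      · refine le_trans (Real.rpow_le_rpow_of_exponent_ge h0 h h1β) ?_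
        rw [Real.rpow_one]
        exact le_max_left _ _
    · refine le_trans (Real.rpow_le_rpow_of_exponent_le h.le
        (by linarith : (1:ℝ)/β ≤ 1/β + 1)) ?_
      exact le_max_right _ _
  have hq6 : (0:ℝ) ≤ CG + 6*c₁ := by linarith only [hCG0, hc₁0]
  have hC0 : (0:ℝ) ≤ ((S:ℝ)+1)*(CG+6*c₁)+1 := by
    nlinarith only [mul_nonneg hS0 hq6, hq6]
  have hKmx : c₁*K ≤ c₁*mx := mul_le_mul_of_nonneg_left hmxK hc₁0.le
  constructor
  · have hone : ∀ i : Fin S, holderSemi (fun u => Z u i) 0 T β ≤ ZC := by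
      intro i
      refine Real.sSup_le ?_ hZC0
      rintro c ⟨u, v, hu, huv, hvT, rfl⟩
      rw [div_le_iff₀ (Real.rpow_pos_of_pos (by linarith only [huv]) β)]
      exact hZB i u v hu huv hvT
    have hsumZ : (∑ i, holderSemi (fun u => Z u i) 0 T β) ≤ (S:ℝ)*ZC := by
      refine le_trans (Finset.sum_le_sum fun i _ => hone i) ?_
      rw [Finset.sum_const, Finset.card_univ, Fintype.card_fin, nsmul_eq_mul]
    refine le_trans hsumZ ?_
    have hZCmx : ZC ≤ (CG + 6*c₁)*mx := by
      rw [hZCdef, hHYdef]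
      linarith only [hKmx]
    calc (S:ℝ)*ZC ≤ (S:ℝ)*((CG+6*c₁)*mx) := mul_le_mul_of_nonneg_left hZCmx hS0
    _ ≤ (((S:ℝ)+1)*(CG+6*c₁)+1)*mx := by
        nlinarith only [mul_nonneg hq6 hmx0, hmx0]
    _ = (((S:ℝ)+1)*(CG+6*c₁)+1)*(max K (K^((1:ℝ)/β))) := by rw [hmxdef]
  · refine Real.sSup_le ?_ (mul_nonneg hC0 (le_trans hK (le_max_left _ _)))
    rintro c ⟨u, v, hu, huv, hvT, rfl⟩
    rw [div_le_iff₀ (Real.rpow_pos_of_pos (by linarith only [huv]) β)]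
    refine le_trans (hO1 u v hu huv.le hvT) ?_
    refine mul_le_mul_of_nonneg_right ?_ (Real.rpow_nonneg (by linarith only [huv]) β)
    have hco : CG + 2*c₁ ≤ ((S:ℝ)+1)*(CG+6*c₁)+1 := by
      nlinarith only [mul_nonneg hS0 hq6, hc₁0, hCG0]
    calc HY = CG*mx + 2*(c₁*K) := hHYdef
    _ ≤ CG*mx + 2*(c₁*mx) := by linarith only [hKmx]
    _ = (CG + 2*c₁)*mx := by ring
    _ ≤ (((S:ℝ)+1)*(CG+6*c₁)+1)*mx := mul_le_mul_of_nonneg_right hco hmx0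
    _ ≤ (((S:ℝ)+1)*(CG+6*c₁)+1)*(max K (K^((1:ℝ)/β + 1))) :=
        mul_le_mul_of_nonneg_left hmax12 hC0
end

section
/- Let $p\ge 1$ and let $f$ be a stochastic process on $[0,T]$ with $\sup\{\|f_v-f_u\|_{L^{2p}(\Omega)}/(v-u)^\beta : 0\le u<v\le T\}<\infty$ for some $\beta\in(1/2,1)$ and $\sup_t\|f_t\|_{L^{2p}}<\infty$. Suppose $\{g_n\}$ are processes of the form $g_n(t_i)=\sum_{k=0}^{i-1}\xi_{n,k}$ on the uniform grid $t_k=kT/n$ satisfying $\|g_n(t_j)-g_n(t_i)\|_{L^{2p}(\Omega)}\le C|t_j-t_i|^{1/2}$ for all grid points $t_i<t_j$, with $C$ independent of $n$. Then $\|\sum_{k=i}^{j-1} f_{t_k}\xi_{n,k}\|_{L^p(\Omega)}\le C'|t_j-t_i|^{1/2}$ for all grid points, with $C'=C'(p,f)$ independent of $n$. -/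
open MeasureTheory
open scoped ENNReal
set_option maxHeartbeats 1000000

/-- **Transfer lemma for weighted sums of increments.**
Let `p ≥ 1` and let `f` be a process with `‖f_v - f_u‖_{L^{2p}} ≤ K_f (v-u)^β`
(`β ∈ (1/2,1)`) and `sup_t ‖f_t‖_{L^{2p}} < ∞`. If `g_n(t_i) = ∑_{k<i} ξ_{n,k}` on the
uniform grid `t_k = kT/n` satisfies `‖g_n(t_j) - g_n(t_i)‖_{L^{2p}} ≤ C |t_j - t_i|^{1/2}`
with `C` independent of `n`, then
`‖∑_{k=i}^{j-1} f_{t_k} ξ_{n,k}‖_{L^p} ≤ C' |t_j - t_i|^{1/2}` with `C' = C'(p,f)`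
independent of `n`. -/
theorem transfer_lemma_weighted_sums
    {Ω : Type*} [MeasurableSpace Ω] (μ : Measure Ω) [IsProbabilityMeasure μ]
    (T : ℝ) (hT : 0 < T) (p β : ℝ) (hp : 1 ≤ p) (hβ : β ∈ Set.Ioo (1/2 : ℝ) 1)
    (f : ℝ → Ω → ℝ) (hfmeas : ∀ t, AEStronglyMeasurable (f t) μ)
    (Kf : ℝ)
    (hfholder : ∀ u v : ℝ, 0 ≤ u → u < v → v ≤ T →
      eLpNorm (fun ω => f v ω - f u ω) (ENNReal.ofReal (2 * p)) μ ≤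
        ENNReal.ofReal (Kf * (v - u) ^ β))
    (hfbdd : ∀ t : ℝ, 0 ≤ t → t ≤ T →
      eLpNorm (f t) (ENNReal.ofReal (2 * p)) μ ≤ ENNReal.ofReal Kf)
    (ξ : ℕ → ℕ → Ω → ℝ) (hξmeas : ∀ n k, AEStronglyMeasurable (ξ n k) μ)
    (C : ℝ)
    (hg : ∀ (n : ℕ), 0 < n → ∀ i j : ℕ, i < j → j ≤ n →
      eLpNorm (fun ω => ∑ k ∈ Finset.Ico i j, ξ n k ω) (ENNReal.ofReal (2 * p)) μ ≤
        ENNReal.ofReal (C * (((j : ℝ) * T / n) - ((i : ℝ) * T / n)) ^ (1/2 : ℝ))) :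
    ∃ C' : ℝ, 0 < C' ∧ ∀ (n : ℕ), 0 < n → ∀ i j : ℕ, i < j → j ≤ n →
      eLpNorm (fun ω => ∑ k ∈ Finset.Ico i j, f ((k : ℝ) * T / n) ω * ξ n k ω)
          (ENNReal.ofReal p) μ ≤
        ENNReal.ofReal (C' * (((j : ℝ) * T / n) - ((i : ℝ) * T / n)) ^ (1/2 : ℝ)) := by
  obtain ⟨hβ1, hβ2⟩ := hβ
  have hp0 : (0:ℝ) < p := lt_of_lt_of_le one_pos hp
  have hp1' : (1:ℝ≥0∞) ≤ ENNReal.ofReal p := by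
    rw [show (1:ℝ≥0∞) = ENNReal.ofReal 1 by simp]
    exact ENNReal.ofReal_le_ofReal hp
  set K₀ : ℝ := max Kf 1 with hK₀def
  set C₀ : ℝ := max C 1 with hC₀def
  have hK₀ : (1:ℝ) ≤ K₀ := le_max_right _ _
  have hC₀ : (1:ℝ) ≤ C₀ := le_max_right _ _
  have hK₀0 : (0:ℝ) < K₀ := lt_of_lt_of_le one_pos hK₀
  have hC₀0 : (0:ℝ) < C₀ := lt_of_lt_of_le one_pos hC₀
  set ρ : ℝ := (2/3 : ℝ) ^ (β - 1/2 : ℝ) with hρdef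
  have hρ0 : 0 ≤ ρ := Real.rpow_nonneg (by norm_num) _
  have hρ1 : ρ < 1 := Real.rpow_lt_one (by norm_num) (by norm_num) (by linarith)
  set A : ℝ := K₀ * C₀ / (1 - ρ) with hAdef
  have hA : 0 < A := div_pos (mul_pos hK₀0 hC₀0) (by linarith)
  have h1ρ : (1:ℝ) - ρ ≠ 0 := by linarith
  have hAρ : A * ρ + K₀ * C₀ = A := by
    rw [hAdef]; field_simp; ring
  -- Hölder inequality
  have hpq : (1:ℝ≥0∞)/(ENNReal.ofReal p) = 1/(ENNReal.ofReal (2*p)) + 1/(ENNReal.ofReal (2*p)) := by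
    rw [ENNReal.ofReal_mul (by norm_num : (0:ℝ) ≤ 2), ENNReal.ofReal_ofNat,
      one_div, one_div, ENNReal.mul_inv (by norm_num) (by norm_num), ← two_mul,
      ← mul_assoc, ENNReal.mul_inv_cancel (by norm_num) (by norm_num), one_mul]
  have Hold : ∀ X Y : Ω → ℝ, AEStronglyMeasurable X μ → AEStronglyMeasurable Y μ →
      eLpNorm (fun ω => X ω * Y ω) (ENNReal.ofReal p) μ ≤
        eLpNorm X (ENNReal.ofReal (2*p)) μ * eLpNorm Y (ENNReal.ofReal (2*p)) μ := by
    intro X Y hX hY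
    haveI : ENNReal.HolderTriple (ENNReal.ofReal (2*p)) (ENNReal.ofReal (2*p)) (ENNReal.ofReal p) :=
      ⟨by simpa [one_div] using hpq.symm⟩
    have h := eLpNorm_smul_le_mul_eLpNorm (p := ENNReal.ofReal (2*p)) (q := ENNReal.ofReal (2*p))
      (r := ENNReal.ofReal p) hY hX
    rwa [show X • Y = fun ω => X ω * Y ω from rfl] at h
  -- upgraded hypotheses
  have hfholder' : ∀ u v : ℝ, 0 ≤ u → u < v → v ≤ T →
      eLpNorm (fun ω => f v ω - f u ω) (ENNReal.ofReal (2*p)) μ ≤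
        ENNReal.ofReal (K₀ * (v - u) ^ β) := fun u v h0 huv hvT =>
    (hfholder u v h0 huv hvT).trans (ENNReal.ofReal_le_ofReal
      (mul_le_mul_of_nonneg_right (le_max_left _ _) (Real.rpow_nonneg (by linarith) _)))
  have hfbdd' : ∀ t : ℝ, 0 ≤ t → t ≤ T →
      eLpNorm (f t) (ENNReal.ofReal (2*p)) μ ≤ ENNReal.ofReal K₀ := fun t h0 ht =>
    (hfbdd t h0 ht).trans (ENNReal.ofReal_le_ofReal (le_max_left _ _))
  have hg' : ∀ (n : ℕ), 0 < n → ∀ i j : ℕ, i < j → j ≤ n →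
      eLpNorm (fun ω => ∑ k ∈ Finset.Ico i j, ξ n k ω) (ENNReal.ofReal (2 * p)) μ ≤
        ENNReal.ofReal (C₀ * (((j:ℝ) - (i:ℝ)) * (T/(n:ℝ))) ^ (1/2 : ℝ)) := by
    intro n hn i j hij hjn
    refine (hg n hn i j hij hjn).trans (ENNReal.ofReal_le_ofReal ?_)
    have hbase : (((j:ℝ) * T / n) - ((i:ℝ) * T / n)) = ((j:ℝ) - (i:ℝ)) * (T/(n:ℝ)) := by
      ring
    rw [hbase]
    have hji : (0:ℝ) ≤ ((j:ℝ) - (i:ℝ)) := by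
      have : (i:ℝ) ≤ (j:ℝ) := by exact_mod_cast hij.le
      linarith
    have hTn : (0:ℝ) ≤ T/(n:ℝ) := by positivity
    exact mul_le_mul_of_nonneg_right (le_max_left _ _) (Real.rpow_nonneg
      (mul_nonneg hji hTn) _)
  -- grid helpers
  have hij_sub : ∀ (n : ℕ), 0 < n → ∀ i j : ℕ, i ≤ j →
      ((j:ℝ) - (i:ℝ)) * (T/(n:ℝ)) = ((j - i : ℕ):ℝ) * (T/(n:ℝ)) := by
    intro n hn i j hij
    rw [Nat.cast_sub hij]
  -- power splitting helper
  have hsplitpow : ∀ x : ℝ, 0 < x → x^(β+1/2:ℝ) = x * x^(β-1/2:ℝ) := by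
    intro x hx
    rw [show (β+1/2:ℝ) = 1 + (β-1/2) by ring, Real.rpow_add hx, Real.rpow_one]
  -- KEY inductive estimate (sewing / dyadic splitting)
  have key : ∀ m : ℕ, ∀ n : ℕ, 0 < n → ∀ i : ℕ, i + m ≤ n →
      eLpNorm (fun ω => ∑ k ∈ Finset.Ico i (i+m),
          (f ((k:ℝ) * T / n) ω - f ((i:ℝ) * T / n) ω) * ξ n k ω) (ENNReal.ofReal p) μ
        ≤ ENNReal.ofReal (A * ((m:ℝ) * (T/(n:ℝ))) ^ (β + 1/2 : ℝ)) := by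
    intro m
    induction m using Nat.strong_induction_on with
    | _ m IH =>
      intro n hn i hin
      have hd : (0:ℝ) < T/(n:ℝ) := by positivity
      rcases Nat.lt_or_ge m 2 with hm2 | hm2
      · -- trivial cases m = 0, 1
        have hz : (fun ω => ∑ k ∈ Finset.Ico i (i+m),
            (f ((k:ℝ) * T / n) ω - f ((i:ℝ) * T / n) ω) * ξ n k ω) = (fun _ => (0:ℝ)) := by
          funext ω
          interval_cases m
          · simp
          · simp
        rw [hz, eLpNorm_zero']
        exact zero_le
      · -- splitting step
        set m₂ := m / 2 with hm₂def
        set m₁ := m - m₂ with hm₁def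
        have h1 : 1 ≤ m₂ := by omega
        have h2 : m₂ ≤ m₁ := by omega
        have h3 : m₁ + m₂ = m := by omega
        have h4 : m₁ < m := by omega
        have h5 : m₂ < m := by omega
        have h6 : 3 * m₁ ≤ 2 * m := by omega
        set k := i + m₁ with hkdef
        set a : ℝ := (m₁ : ℝ) with hadef
        set b : ℝ := (m₂ : ℝ) with hbdef
        set d : ℝ := T/(n:ℝ) with hddef
        have ha : (0:ℝ) < a := by rw [hadef]; exact_mod_cast by omega
        have hb : (0:ℝ) < b := by rw [hbdef]; exact_mod_cast h1
        have hba : b ≤ a := by rw [hadef, hbdef]; exact_mod_cast h2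
        have hcab : (m:ℝ) = a + b := by rw [hadef, hbdef]; exact_mod_cast h3.symm
        have h6' : a ≤ 2/3 * (a + b) := by
          rw [← hcab, hadef]
          have : (3:ℝ) * (m₁:ℝ) ≤ 2 * (m:ℝ) := by exact_mod_cast h6
          linarith
        -- pointwise decomposition
        have hdec : (fun ω => ∑ k' ∈ Finset.Ico i (i+m),
            (f ((k':ℝ) * T / n) ω - f ((i:ℝ) * T / n) ω) * ξ n k' ω)
            = fun ω =>
              (∑ k' ∈ Finset.Ico i (i+m₁),
                (f ((k':ℝ) * T / n) ω - f ((i:ℝ) * T / n) ω) * ξ n k' ω)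
              + ((∑ k' ∈ Finset.Ico k (k+m₂),
                  (f ((k':ℝ) * T / n) ω - f ((k:ℝ) * T / n) ω) * ξ n k' ω)
                + (f ((k:ℝ) * T / n) ω - f ((i:ℝ) * T / n) ω)
                  * ∑ k' ∈ Finset.Ico k (k+m₂), ξ n k' ω) := by
          funext ω
          rw [← Finset.sum_Ico_consecutive _ (show i ≤ k by omega) (show k ≤ i+m by omega)]
          congr 1
          rw [show i + m = k + m₂ by omega, Finset.mul_sum, ← Finset.sum_add_distrib]
          exact Finset.sum_congr rfl fun x hx => by ring
        -- measurability
        have measE : ∀ (a' b' : ℕ) (t : ℝ), AEStronglyMeasurable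
            (fun ω => ∑ k' ∈ Finset.Ico a' b', (f ((k':ℝ) * T / n) ω - f t ω) * ξ n k' ω) μ :=
          fun a' b' t => Finset.aestronglyMeasurable_fun_sum _ fun k' _ =>
            ((hfmeas _).sub (hfmeas t)).mul (hξmeas n k')
        have measS : ∀ (a' b' : ℕ), AEStronglyMeasurable
            (fun ω => ∑ k' ∈ Finset.Ico a' b', ξ n k' ω) μ :=
          fun a' b' => Finset.aestronglyMeasurable_fun_sum _ fun k' _ => hξmeas n k'
        have measC : AEStronglyMeasurable (fun ω =>
            (f ((k:ℝ) * T / n) ω - f ((i:ℝ) * T / n) ω)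
              * ∑ k' ∈ Finset.Ico k (k+m₂), ξ n k' ω) μ :=
          ((hfmeas _).sub (hfmeas _)).mul (measS _ _)
        -- the three bounds
        have B1 := IH m₁ h4 n hn i (by omega)
        have B2 := IH m₂ h5 n hn k (by omega)
        have B3 : eLpNorm (fun ω =>
            (f ((k:ℝ) * T / n) ω - f ((i:ℝ) * T / n) ω)
              * ∑ k' ∈ Finset.Ico k (k+m₂), ξ n k' ω) (ENNReal.ofReal p) μ
            ≤ ENNReal.ofReal (K₀ * (a*d)^β) * ENNReal.ofReal (C₀ * (b*d)^(1/2:ℝ)) := by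
          refine (Hold _ _ ((hfmeas _).sub (hfmeas _)) (measS _ _)).trans ?_
          have hik : ((i:ℝ) * T / n) < ((k:ℝ) * T / n) := by
            rw [hkdef]
            have : (i:ℝ) < (i:ℝ) + (m₁:ℝ) := by linarith [ha]
            push_cast
            rw [div_lt_div_iff_of_pos_right (by exact_mod_cast hn)]
            nlinarith [hT]
          have hi0 : (0:ℝ) ≤ (i:ℝ) * T / n := by positivity
          have hkT : ((k:ℝ) * T / n) ≤ T := by
            rw [div_le_iff₀ (by exact_mod_cast hn)]
            have hkn : (k:ℝ) ≤ (n:ℝ) := by exact_mod_cast (by omega : k ≤ n)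
            nlinarith [hT]
          have hdiff : ((k:ℝ) * T / n) - ((i:ℝ) * T / n) = a * d := by
            rw [hkdef, hadef, hddef]; push_cast; ring
          have F1 := hfholder' _ _ hi0 hik hkT
          rw [hdiff] at F1
          have F2 := hg' n hn k (k + m₂) (by omega) (by omega)
          have hdiff2 : (((k+m₂:ℕ):ℝ) - (k:ℝ)) * (T/(n:ℝ)) = b * d := by
            rw [hbdef, hddef]; push_cast; ring
          rw [hdiff2] at F2
          exact mul_le_mul' F1 F2
        -- assemble
        rw [hdec]
        refine (eLpNorm_add_le (measE i (i+m₁) _) ((measE k (k+m₂) _).add measC) hp1').trans ?_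
        refine le_trans (add_le_add B1 (le_trans
          (eLpNorm_add_le (measE k (k+m₂) _) measC hp1') (add_le_add B2 B3))) ?_
        rw [← ENNReal.ofReal_mul (by positivity : (0:ℝ) ≤ K₀ * (a*d)^β),
          ← ENNReal.ofReal_add (by positivity) (by positivity),
          ← ENNReal.ofReal_add (by positivity) (by positivity)]
        refine ENNReal.ofReal_le_ofReal ?_
        -- the real inequality
        rw [hcab]
        have habd : (0:ℝ) < a + b := by linarith
        have e1 : (a*d)^(β+1/2:ℝ) = a^(β+1/2:ℝ) * d^(β+1/2:ℝ) := Real.mul_rpow ha.le hd.le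
        have e2 : (b*d)^(β+1/2:ℝ) = b^(β+1/2:ℝ) * d^(β+1/2:ℝ) := Real.mul_rpow hb.le hd.le
        have e3 : ((a+b)*d)^(β+1/2:ℝ) = (a+b)^(β+1/2:ℝ) * d^(β+1/2:ℝ) :=
          Real.mul_rpow habd.le hd.le
        have e4 : (a*d)^β * ((b*d)^(1/2:ℝ)) = a^β * b^(1/2:ℝ) * d^(β+1/2:ℝ) := by
          rw [Real.mul_rpow ha.le hd.le, Real.mul_rpow hb.le hd.le,
            Real.rpow_add hd β (1/2 : ℝ)]
          ring
        have key1 : a^(β+1/2:ℝ) + b^(β+1/2:ℝ) ≤ ρ * (a+b)^(β+1/2:ℝ) := by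
          have step1 : b^(β-1/2:ℝ) ≤ a^(β-1/2:ℝ) :=
            Real.rpow_le_rpow hb.le hba (by linarith)
          have step2 : a^(β-1/2:ℝ) ≤ ρ * (a+b)^(β-1/2:ℝ) := by
            have := Real.rpow_le_rpow ha.le h6' (by linarith : (0:ℝ) ≤ β - 1/2)
            rwa [Real.mul_rpow (by norm_num) (by linarith)] at this
          calc a^(β+1/2:ℝ) + b^(β+1/2:ℝ)
              = a * a^(β-1/2:ℝ) + b * b^(β-1/2:ℝ) := by
                rw [hsplitpow a ha, hsplitpow b hb]
            _ ≤ a * a^(β-1/2:ℝ) + b * a^(β-1/2:ℝ) := by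
                have := mul_le_mul_of_nonneg_left step1 hb.le
                linarith
            _ = (a+b) * a^(β-1/2:ℝ) := by ring
            _ ≤ (a+b) * (ρ * (a+b)^(β-1/2:ℝ)) :=
                mul_le_mul_of_nonneg_left step2 habd.le
            _ = ρ * ((a+b) * (a+b)^(β-1/2:ℝ)) := by ring
            _ = ρ * (a+b)^(β+1/2:ℝ) := by rw [← hsplitpow (a+b) habd]
        have key2 : a^β * b^(1/2:ℝ) ≤ (a+b)^(β+1/2:ℝ) := by
          have s1 : a^β ≤ (a+b)^β :=
            Real.rpow_le_rpow ha.le (by linarith) (by linarith)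
          have s2 : b^(1/2:ℝ) ≤ (a+b)^(1/2:ℝ) :=
            Real.rpow_le_rpow hb.le (by linarith) (by norm_num)
          calc a^β * b^(1/2:ℝ) ≤ (a+b)^β * (a+b)^(1/2:ℝ) :=
                mul_le_mul s1 s2 (Real.rpow_nonneg hb.le _) (Real.rpow_nonneg (by linarith) _)
            _ = (a+b)^(β+1/2:ℝ) := by rw [← Real.rpow_add habd]
        have hdθ : (0:ℝ) ≤ d^(β+1/2:ℝ) := Real.rpow_nonneg hd.le _
        calc A * (a*d)^(β+1/2:ℝ) + (A * (b*d)^(β+1/2:ℝ) + K₀ * (a*d)^β * (C₀ * (b*d)^(1/2:ℝ)))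
            = (A * (a^(β+1/2:ℝ) + b^(β+1/2:ℝ)) + K₀ * C₀ * (a^β * b^(1/2:ℝ))) * d^(β+1/2:ℝ) := by
              rw [e1, e2]
              rw [show K₀ * (a*d)^β * (C₀ * (b*d)^(1/2:ℝ))
                  = K₀ * C₀ * ((a*d)^β * ((b*d)^(1/2:ℝ))) by ring, e4]
              ring
          _ ≤ (A * (ρ * (a+b)^(β+1/2:ℝ)) + K₀ * C₀ * (a+b)^(β+1/2:ℝ)) * d^(β+1/2:ℝ) := by
              apply mul_le_mul_of_nonneg_right _ hdθ
              have t1 : A * (a^(β+1/2:ℝ) + b^(β+1/2:ℝ)) ≤ A * (ρ * (a+b)^(β+1/2:ℝ)) :=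
                mul_le_mul_of_nonneg_left key1 hA.le
              have t2 : K₀ * C₀ * (a^β * b^(1/2:ℝ)) ≤ K₀ * C₀ * (a+b)^(β+1/2:ℝ) :=
                mul_le_mul_of_nonneg_left key2 (by positivity)
              linarith
          _ = (A * ρ + K₀ * C₀) * (a+b)^(β+1/2:ℝ) * d^(β+1/2:ℝ) := by ring
          _ = A * ((a+b)*d)^(β+1/2:ℝ) := by rw [hAρ, e3]; ring
  -- conclusion
  refine ⟨A * T^(β:ℝ) + K₀ * C₀, by positivity, ?_⟩
  intro n hn i j hij hjn
  set m := j - i with hmdef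
  have hm1 : 1 ≤ m := by omega
  have hjm : j = i + m := by omega
  have hd : (0:ℝ) < T/(n:ℝ) := by positivity
  have hmd : (0:ℝ) < (m:ℝ) * (T/(n:ℝ)) := by
    have : (0:ℝ) < (m:ℝ) := by exact_mod_cast hm1
    positivity
  have hdiffg : ((j:ℝ) * T / n) - ((i:ℝ) * T / n) = (m:ℝ) * (T/(n:ℝ)) := by
    rw [hjm]; push_cast; ring
  have hdec : (fun ω => ∑ k ∈ Finset.Ico i j, f ((k:ℝ) * T / n) ω * ξ n k ω)
      = fun ω =>
        (∑ k ∈ Finset.Ico i (i+m),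
          (f ((k:ℝ) * T / n) ω - f ((i:ℝ) * T / n) ω) * ξ n k ω)
        + f ((i:ℝ) * T / n) ω * ∑ k ∈ Finset.Ico i (i+m), ξ n k ω := by
    funext ω
    rw [hjm, Finset.mul_sum, ← Finset.sum_add_distrib]
    exact Finset.sum_congr rfl fun x hx => by ring
  have measE : AEStronglyMeasurable
      (fun ω => ∑ k ∈ Finset.Ico i (i+m),
        (f ((k:ℝ) * T / n) ω - f ((i:ℝ) * T / n) ω) * ξ n k ω) μ :=
    Finset.aestronglyMeasurable_fun_sum _ fun k' _ =>
      ((hfmeas _).sub (hfmeas _)).mul (hξmeas n k')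
  have measS : AEStronglyMeasurable (fun ω => ∑ k ∈ Finset.Ico i (i+m), ξ n k ω) μ :=
    Finset.aestronglyMeasurable_fun_sum _ fun k' _ => hξmeas n k'
  have B1 := key m n hn i (by omega)
  have B2 : eLpNorm (fun ω => f ((i:ℝ) * T / n) ω * ∑ k ∈ Finset.Ico i (i+m), ξ n k ω)
      (ENNReal.ofReal p) μ
      ≤ ENNReal.ofReal K₀ * ENNReal.ofReal (C₀ * ((m:ℝ) * (T/(n:ℝ)))^(1/2:ℝ)) := by
    refine (Hold _ _ (hfmeas _) measS).trans ?_
    have hi0 : (0:ℝ) ≤ (i:ℝ) * T / n := by positivity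
    have hiT : ((i:ℝ) * T / n) ≤ T := by
      rw [div_le_iff₀ (by exact_mod_cast hn)]
      have hin : (i:ℝ) ≤ (n:ℝ) := by exact_mod_cast (by omega : i ≤ n)
      nlinarith [hT]
    have F2 := hg' n hn i (i+m) (by omega) (by omega)
    have hdiff2 : (((i+m:ℕ):ℝ) - (i:ℝ)) * (T/(n:ℝ)) = (m:ℝ) * (T/(n:ℝ)) := by
      push_cast; ring
    rw [hdiff2] at F2
    exact mul_le_mul' (hfbdd' _ hi0 hiT) F2
  rw [hdec, hdiffg]
  refine (eLpNorm_add_le measE ((hfmeas _).mul measS) hp1').trans ?_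
  refine le_trans (add_le_add B1 B2) ?_
  rw [← ENNReal.ofReal_mul (by positivity : (0:ℝ) ≤ K₀),
    ← ENNReal.ofReal_add (by positivity) (by positivity)]
  refine ENNReal.ofReal_le_ofReal ?_
  -- final real inequality
  have hmdT : (m:ℝ) * (T/(n:ℝ)) ≤ T := by
    have hmn : (m:ℝ) ≤ (n:ℝ) := by exact_mod_cast (by omega : m ≤ n)
    rw [mul_div_assoc'] at *
    rw [div_le_iff₀ (by exact_mod_cast hn)]
    nlinarith [hT]
  have e5 : ((m:ℝ) * (T/(n:ℝ)))^(β+1/2:ℝ)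
      = ((m:ℝ) * (T/(n:ℝ)))^(β:ℝ) * ((m:ℝ) * (T/(n:ℝ)))^(1/2:ℝ) := by
    rw [← Real.rpow_add hmd]
  have e6 : ((m:ℝ) * (T/(n:ℝ)))^(β:ℝ) ≤ T^(β:ℝ) :=
    Real.rpow_le_rpow hmd.le hmdT (by linarith)
  have hhalf : (0:ℝ) ≤ ((m:ℝ) * (T/(n:ℝ)))^(1/2:ℝ) := Real.rpow_nonneg hmd.le _
  calc A * ((m:ℝ) * (T/(n:ℝ)))^(β+1/2:ℝ) + K₀ * (C₀ * ((m:ℝ) * (T/(n:ℝ)))^(1/2:ℝ))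
      = A * ((m:ℝ) * (T/(n:ℝ)))^(β:ℝ) * ((m:ℝ) * (T/(n:ℝ)))^(1/2:ℝ)
        + K₀ * C₀ * ((m:ℝ) * (T/(n:ℝ)))^(1/2:ℝ) := by rw [e5]; ring
    _ ≤ A * T^(β:ℝ) * ((m:ℝ) * (T/(n:ℝ)))^(1/2:ℝ)
        + K₀ * C₀ * ((m:ℝ) * (T/(n:ℝ)))^(1/2:ℝ) := by
        have := mul_le_mul_of_nonneg_right
          (mul_le_mul_of_nonneg_left e6 hA.le) hhalf
        linarith
    _ = (A * T^(β:ℝ) + K₀ * C₀) * ((m:ℝ) * (T/(n:ℝ)))^(1/2:ℝ) := by ring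
end
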